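/- arXiv:0803.1320 — 5 statements merged into one kernel-verified Lean document; each statement's English description precedes it below -/
import Mathlib

section
/- For any two diffeomorphisms φ, ψ of ℝⁿ, for all indices 1 ≤ i,j,k ≤ n and every (x,y) ∈ ℝⁿ × GL(n,ℝ), the cocycle identity holds: γ^i_{jk}(φ∘ψ)(x,y) = γ^i_{jk}(φ)(ψ(x), ψ'(x)·y) + γ^i_{jk}(ψ)(x,y), i.e. γ(φ∘ψ) = γ(φ)∘ψ̃ + γ(ψ). -/
open scoped Matrix

noncomputable section

/-- A `C^∞` diffeomorphism of `ℝⁿ` (a bijective `C^∞` map with `C^∞` inverse). -/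
structure Diffeo (n : ℕ) where
  toFun : (Fin n → ℝ) → (Fin n → ℝ)
  invFun : (Fin n → ℝ) → (Fin n → ℝ)
  left_inv : Function.LeftInverse invFun toFun
  right_inv : Function.RightInverse invFun toFun
  smooth_toFun : ContDiff ℝ (⊤ : ℕ∞) toFun
  smooth_invFun : ContDiff ℝ (⊤ : ℕ∞) invFun

/-- Membership in the group `G` of invertible affine transformations of `ℝⁿ`:
maps `x ↦ A·x + b` with `A ∈ GL(n,ℝ)`, `b ∈ ℝⁿ`. -/
def IsAffineMap (n : ℕ) (f : (Fin n → ℝ) → (Fin n → ℝ)) : Prop :=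
  ∃ A : Matrix (Fin n) (Fin n) ℝ, IsUnit A ∧ ∃ b : Fin n → ℝ, ∀ x, f x = A.mulVec x + b

/-- Membership in the group `N` of diffeomorphisms `ψ` with `ψ(0) = 0` and `Dψ(0) = Id`. -/
def InN (n : ℕ) (ψ : Diffeo n) : Prop :=
  ψ.toFun 0 = 0 ∧ fderiv ℝ ψ.toFun 0 = ContinuousLinearMap.id ℝ (Fin n → ℝ)

/-- The Jacobian matrix of `f` at `x`: entry `(i,j)` is `∂ⱼ f^i (x)`. -/
def jacobianM (n : ℕ) (f : (Fin n → ℝ) → (Fin n → ℝ)) (x : Fin n → ℝ) :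
    Matrix (Fin n) (Fin n) ℝ :=
  Matrix.of fun i j => fderiv ℝ f x (Pi.single j 1) i

/-- The second-order partial derivative `∂ⱼ∂ₖ f^i (x)`. -/
def secondPartial (n : ℕ) (f : (Fin n → ℝ) → (Fin n → ℝ)) (i j k : Fin n)
    (x : Fin n → ℝ) : ℝ :=
  fderiv ℝ (fun z => fderiv ℝ f z (Pi.single k 1) i) x (Pi.single j 1)

/-- The cocycle `γ^i_{jk}(f)(x,y) = Σ (y⁻¹)^i_λ (f'(x)⁻¹)^λ_ρ ∂_μ∂_ν f^ρ(x) y^ν_j y^μ_k`. -/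
def gammaFn (n : ℕ) (f : (Fin n → ℝ) → (Fin n → ℝ)) (i j k : Fin n)
    (x : Fin n → ℝ) (y : Fin n → Fin n → ℝ) : ℝ :=
  ∑ lam : Fin n, ∑ ρ : Fin n, ∑ μ : Fin n, ∑ ν : Fin n,
    (Matrix.of y)⁻¹ i lam * (jacobianM n f x)⁻¹ lam ρ
      * secondPartial n f ρ μ ν x * y ν j * y μ k

lemma clm_decomp (L : (Fin n → ℝ) →L[ℝ] (Fin n → ℝ)) (v : Fin n → ℝ) (ρ : Fin n) :
    L v ρ = ∑ b : Fin n, v b * L (Pi.single b 1) ρ := by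
  have hv : v = ∑ b : Fin n, v b • (Pi.single b 1 : Fin n → ℝ) := by
    rw [← Finset.univ_sum_single v]
    congr 1; funext b
    rw [← Pi.single_smul]
    simp
  conv_lhs => rw [hv]
  rw [map_sum]
  simp [smul_eq_mul]

lemma clm_decomp' (L : (Fin n → ℝ) →L[ℝ] ℝ) (v : Fin n → ℝ) :
    L v = ∑ b : Fin n, v b * L (Pi.single b 1) := by
  have hv : v = ∑ b : Fin n, v b • (Pi.single b 1 : Fin n → ℝ) := by
    rw [← Finset.univ_sum_single v]
    congr 1; funext b
    rw [← Pi.single_smul]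
    simp
  conv_lhs => rw [hv]
  rw [map_sum]
  simp [smul_eq_mul]

lemma diffOf {f : (Fin n → ℝ) → (Fin n → ℝ)} (hf : ContDiff ℝ (⊤ : ℕ∞) f) :
    Differentiable ℝ f := hf.differentiable (by simp)

lemma diffOf' {f : (Fin n → ℝ) → ℝ} (hf : ContDiff ℝ (⊤ : ℕ∞) f) :
    Differentiable ℝ f := hf.differentiable (by simp)

lemma smooth_fderiv_apply {f : (Fin n → ℝ) → (Fin n → ℝ)} (hf : ContDiff ℝ (⊤ : ℕ∞) f)
    (v : Fin n → ℝ) (c : Fin n) :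
    ContDiff ℝ (⊤ : ℕ∞) (fun z => fderiv ℝ f z v c) := by
  have h1 : ContDiff ℝ (⊤ : ℕ∞) (fderiv ℝ f) := by
    apply hf.fderiv_right
    exact_mod_cast le_top
  have h2 : ContDiff ℝ (⊤ : ℕ∞) (fun z => fderiv ℝ f z v) := h1.clm_apply contDiff_const
  exact (contDiff_pi.mp h2) c

lemma jac_comp {f g : (Fin n → ℝ) → (Fin n → ℝ)} (hf : ContDiff ℝ (⊤ : ℕ∞) f)
    (hg : ContDiff ℝ (⊤ : ℕ∞) g) (x : Fin n → ℝ) :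
    jacobianM n (f ∘ g) x = jacobianM n f (g x) * jacobianM n g x := by
  have hcomp := fderiv_comp x (diffOf hf (g x)) (diffOf hg x)
  ext a b
  simp only [jacobianM, Matrix.mul_apply, Matrix.of_apply, hcomp,
    ContinuousLinearMap.comp_apply]
  rw [clm_decomp]
  apply Finset.sum_congr rfl
  intro c _
  ring

lemma jac_id (x : Fin n → ℝ) : jacobianM n id x = 1 := by
  ext a b
  simp [jacobianM, Matrix.one_apply, Pi.single_apply, eq_comm]

lemma jac_isUnit (φ : Diffeo n) (x : Fin n → ℝ) : IsUnit (jacobianM n φ.toFun x) := by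
  have h : jacobianM n (φ.invFun ∘ φ.toFun) x = 1 := by
    have : φ.invFun ∘ φ.toFun = id := funext φ.left_inv
    rw [this, jac_id]
  rw [jac_comp φ.smooth_invFun φ.smooth_toFun] at h
  rw [Matrix.isUnit_iff_isUnit_det]
  have := congrArg Matrix.det h
  rw [Matrix.det_mul, Matrix.det_one] at this
  exact IsUnit.of_mul_eq_one (jacobianM n φ.invFun (φ.toFun x)).det (by linarith [this])

lemma sp_comp {f g : (Fin n → ℝ) → (Fin n → ℝ)} (hf : ContDiff ℝ (⊤ : ℕ∞) f)
    (hg : ContDiff ℝ (⊤ : ℕ∞) g) (x : Fin n → ℝ) (ρ μ ν : Fin n) :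
    secondPartial n (f ∘ g) ρ μ ν x
      = (∑ a : Fin n, ∑ b : Fin n, secondPartial n f ρ a b (g x)
          * jacobianM n g x a μ * jacobianM n g x b ν)
        + ∑ b : Fin n, jacobianM n f (g x) ρ b * secondPartial n g b μ ν x := by
  have hfd := diffOf hf
  have hgd := diffOf hg
  set u : Fin n → (Fin n → ℝ) → ℝ := fun b z => fderiv ℝ g z (Pi.single ν 1) b with hu
  set w : Fin n → (Fin n → ℝ) → ℝ := fun b z => fderiv ℝ f (g z) (Pi.single b 1) ρ with hw
  have heq : (fun z => fderiv ℝ (f ∘ g) z (Pi.single ν 1) ρ)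
      = fun z => ∑ b : Fin n, u b z * w b z := by
    funext z
    rw [fderiv_comp z (hfd (g z)) (hgd z), ContinuousLinearMap.comp_apply, clm_decomp]
  have hudiff : ∀ b, DifferentiableAt ℝ (u b) x := fun b =>
    (diffOf' (smooth_fderiv_apply hg _ b)) x
  have hwdiff : ∀ b, DifferentiableAt ℝ (w b) x := fun b =>
    DifferentiableAt.comp x ((diffOf' (smooth_fderiv_apply hf _ ρ)) (g x)) (hgd x)
  have hux : ∀ b, u b x = jacobianM n g x b ν := fun b => rfl
  have hwx : ∀ b, w b x = jacobianM n f (g x) ρ b := fun b => rfl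
  have hdu : ∀ b, fderiv ℝ (u b) x (Pi.single μ 1) = secondPartial n g b μ ν x :=
    fun b => rfl
  have hdw : ∀ b, fderiv ℝ (w b) x (Pi.single μ 1)
      = ∑ a : Fin n, jacobianM n g x a μ * secondPartial n f ρ a b (g x) := by
    intro b
    have : w b = (fun z => fderiv ℝ f z (Pi.single b 1) ρ) ∘ g := rfl
    rw [this, fderiv_comp x ((diffOf' (smooth_fderiv_apply hf _ ρ)) (g x)) (hgd x),
      ContinuousLinearMap.comp_apply, clm_decomp']
    rfl
  show (fderiv ℝ (fun z => fderiv ℝ (f ∘ g) z (Pi.single ν 1) ρ) x) (Pi.single μ 1) = _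
  rw [heq, fderiv_fun_sum (A := fun b z => u b z * w b z) (fun b _ => (hudiff b).mul (hwdiff b)),
    ContinuousLinearMap.sum_apply]
  have : ∀ b : Fin n, (fderiv ℝ (fun z => u b z * w b z) x) (Pi.single μ 1)
      = u b x * fderiv ℝ (w b) x (Pi.single μ 1) + w b x * fderiv ℝ (u b) x (Pi.single μ 1) := by
    intro b
    rw [fderiv_fun_mul (hudiff b) (hwdiff b)]
    simp [smul_eq_mul]
  rw [Finset.sum_congr rfl (fun b _ => this b)]
  rw [Finset.sum_add_distrib]
  have e1 : ∑ b : Fin n, u b x * (fderiv ℝ (w b) x) (Pi.single μ 1)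
      = ∑ a : Fin n, ∑ b : Fin n, secondPartial n f ρ a b (g x)
          * jacobianM n g x a μ * jacobianM n g x b ν := by
    conv_rhs => rw [Finset.sum_comm]
    apply Finset.sum_congr rfl
    intro b _
    rw [hux b, hdw b, Finset.mul_sum]
    apply Finset.sum_congr rfl
    intro a _
    ring
  have e2 : ∑ b : Fin n, w b x * (fderiv ℝ (u b) x) (Pi.single μ 1)
      = ∑ b : Fin n, jacobianM n f (g x) ρ b * secondPartial n g b μ ν x := by
    apply Finset.sum_congr rfl
    intro b _
    rw [hwx b, hdu b]
  rw [e1, e2]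

lemma gamma_eq (f : (Fin n → ℝ) → (Fin n → ℝ)) (i j k : Fin n) (x : Fin n → ℝ)
    (y : Fin n → Fin n → ℝ) :
    gammaFn n f i j k x y
      = ∑ ρ : Fin n, ((Matrix.of y)⁻¹ * (jacobianM n f x)⁻¹) i ρ
          * ((Matrix.of y)ᵀ
              * (Matrix.of (fun μ ν => secondPartial n f ρ μ ν x) * Matrix.of y)) k j := by
  unfold gammaFn
  rw [Finset.sum_comm]
  apply Finset.sum_congr rfl
  intro ρ _
  simp only [Matrix.mul_apply, Matrix.transpose_apply, Matrix.of_apply]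
  rw [Finset.sum_mul]
  apply Finset.sum_congr rfl
  intro l _
  simp only [Finset.mul_sum]
  apply Finset.sum_congr rfl
  intro μ _
  apply Finset.sum_congr rfl
  intro ν _
  ring

/-- **Cocycle identity**: `γ(φ∘ψ) = γ(φ)∘ψ̃ + γ(ψ)` on `ℝⁿ × GL(n,ℝ)`. -/
theorem stmt3 (n : ℕ) (φ ψ : Diffeo n) (i j k : Fin n) (x : Fin n → ℝ)
    (y : Fin n → Fin n → ℝ) (hy : IsUnit (Matrix.of y)) :
    gammaFn n (φ.toFun ∘ ψ.toFun) i j k x y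
      = gammaFn n φ.toFun i j k (ψ.toFun x)
          (fun a b => ∑ c : Fin n, jacobianM n ψ.toFun x a c * y c b)
        + gammaFn n ψ.toFun i j k x y := by
  set A := jacobianM n φ.toFun (ψ.toFun x) with hAdef
  set B := jacobianM n ψ.toFun x with hBdef
  set Y := Matrix.of y with hYdef
  have hA : IsUnit A := jac_isUnit φ _
  have hAinv : A⁻¹ * A = 1 :=
    Matrix.nonsing_inv_mul _ ((Matrix.isUnit_iff_isUnit_det A).mp hA)
  have hBY : (Matrix.of fun a b => ∑ c : Fin n, jacobianM n ψ.toFun x a c * y c b)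
      = B * Y := by
    ext a b
    simp [Matrix.mul_apply, hBdef, hYdef]
  -- abbreviations for the second-partial matrices
  set Sφ : Fin n → Matrix (Fin n) (Fin n) ℝ :=
    fun ρ => Matrix.of (fun μ ν => secondPartial n φ.toFun ρ μ ν (ψ.toFun x)) with hSφ
  set Sψ : Fin n → Matrix (Fin n) (Fin n) ℝ :=
    fun ρ => Matrix.of (fun μ ν => secondPartial n ψ.toFun ρ μ ν x) with hSψ
  have hJcomp : jacobianM n (φ.toFun ∘ ψ.toFun) x = A * B :=
    jac_comp φ.smooth_toFun ψ.smooth_toFun x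
  have hS : ∀ ρ : Fin n,
      Matrix.of (fun μ ν => secondPartial n (φ.toFun ∘ ψ.toFun) ρ μ ν x)
        = Bᵀ * (Sφ ρ * B) + ∑ a : Fin n, A ρ a • Sψ a := by
    intro ρ
    ext μ ν
    rw [Matrix.add_apply, Matrix.of_apply,
      sp_comp φ.smooth_toFun ψ.smooth_toFun x ρ μ ν]
    congr 1
    · simp only [Matrix.mul_apply, Matrix.transpose_apply, hSφ, Matrix.of_apply]
      apply Finset.sum_congr rfl
      intro a _
      rw [Finset.mul_sum]
      apply Finset.sum_congr rfl
      intro b _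
      ring
    · simp [Matrix.sum_apply, hSψ, hAdef]
  rw [gamma_eq, gamma_eq, gamma_eq, hBY, hJcomp, Matrix.mul_inv_rev A B,
    Matrix.mul_inv_rev B Y]
  have key : ∀ ρ : Fin n,
      Yᵀ * (Matrix.of (fun μ ν => secondPartial n (φ.toFun ∘ ψ.toFun) ρ μ ν x) * Y)
        = (B * Y)ᵀ * (Sφ ρ * (B * Y)) + ∑ a : Fin n, A ρ a • (Yᵀ * (Sψ a * Y)) := by
    intro ρ
    rw [hS ρ, Matrix.add_mul, Matrix.mul_add]
    congr 1
    · rw [Matrix.transpose_mul]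
      simp only [Matrix.mul_assoc]
    · rw [Matrix.sum_mul, Matrix.mul_sum]
      apply Finset.sum_congr rfl
      intro a _
      rw [Matrix.smul_mul, Matrix.mul_smul]
  calc ∑ ρ : Fin n, (Y⁻¹ * (B⁻¹ * A⁻¹)) i ρ
          * (Yᵀ * (Matrix.of (fun μ ν => secondPartial n (φ.toFun ∘ ψ.toFun) ρ μ ν x) * Y)) k j
      = ∑ ρ : Fin n, ((Y⁻¹ * (B⁻¹ * A⁻¹)) i ρ * ((B * Y)ᵀ * (Sφ ρ * (B * Y))) k j
          + ∑ a : Fin n, (Y⁻¹ * (B⁻¹ * A⁻¹)) i ρ * A ρ a * (Yᵀ * (Sψ a * Y)) k j) := by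
        apply Finset.sum_congr rfl
        intro ρ _
        rw [key ρ, Matrix.add_apply, mul_add, Matrix.sum_apply]
        congr 1
        rw [Finset.mul_sum]
        apply Finset.sum_congr rfl
        intro a _
        rw [Matrix.smul_apply, smul_eq_mul]
        ring
    _ = ∑ ρ : Fin n, (Y⁻¹ * B⁻¹ * A⁻¹) i ρ * ((B * Y)ᵀ * (Sφ ρ * (B * Y))) k j
          + ∑ ρ : Fin n, (Y⁻¹ * B⁻¹) i ρ * (Yᵀ * (Sψ ρ * Y)) k j := by
        rw [Finset.sum_add_distrib]
        congr 1
        · apply Finset.sum_congr rfl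
          intro ρ _
          rw [Matrix.mul_assoc]
        · rw [Finset.sum_comm]
          apply Finset.sum_congr rfl
          intro a _
          have : ∑ ρ : Fin n, (Y⁻¹ * (B⁻¹ * A⁻¹)) i ρ * A ρ a * (Yᵀ * (Sψ a * Y)) k j
              = (∑ ρ : Fin n, (Y⁻¹ * (B⁻¹ * A⁻¹)) i ρ * A ρ a) * (Yᵀ * (Sψ a * Y)) k j := by
            rw [Finset.sum_mul]
          rw [this, ← Matrix.mul_apply]
          have h2 : Y⁻¹ * (B⁻¹ * A⁻¹) * A = Y⁻¹ * B⁻¹ := by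
            rw [Matrix.mul_assoc (Y⁻¹) (B⁻¹ * A⁻¹) A, Matrix.mul_assoc (B⁻¹) (A⁻¹) A,
              hAinv, Matrix.mul_one]
          rw [h2]
    _ = _ := by rw [Matrix.mul_assoc]
end
end

section
/- Let φ be a diffeomorphism of ℝⁿ. Then for all indices 1 ≤ i,j,k,ℓ ≤ n and every (x,y) ∈ ℝⁿ × GL(n,ℝ), the Bianchi identity holds: Σ_μ y^μ_k ∂/∂x^μ [γ^i_{jℓ}(φ)](x,y) − Σ_μ y^μ_ℓ ∂/∂x^μ [γ^i_{jk}(φ)](x,y) = Σ_s ( γ^s_{jk}(φ)(x,y)·γ^i_{sℓ}(φ)(x,y) − γ^s_{jℓ}(φ)(x,y)·γ^i_{sk}(φ)(x,y) ); that is, X_k(γ^i_{jℓ}(φ)) − X_ℓ(γ^i_{jk}(φ)) = γ^s_{jk}(φ)γ^i_{sℓ}(φ) − γ^s_{jℓ}(φ)γ^i_{sk}(φ), where X_k f(x,y) = Σ_μ y^μ_k ∂f/∂x^μ. -/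
noncomputable section

namespace BianchiAux

theorem letop' : ((⊤:ℕ∞) : WithTop ℕ∞) + 1 ≤ ((⊤:ℕ∞) : WithTop ℕ∞) := by simp
theorem onele' : ((⊤:ℕ∞) : WithTop ℕ∞) ≠ 0 := by
  simp
theorem twole' : (2 : WithTop ℕ∞) ≤ ((⊤:ℕ∞) : WithTop ℕ∞) := by
  rw [show ((2:WithTop ℕ∞)) = ((2:ℕ∞):WithTop ℕ∞) by rfl]
  exact_mod_cast (le_top : (2:ℕ∞) ≤ ⊤)

variable {n : ℕ}

/-- directional-derivative helpers -/
theorem Dsum {ι : Type*} (s : Finset ι) (F : ι → (Fin n → ℝ) → ℝ) {x : Fin n → ℝ}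
    (hF : ∀ i ∈ s, DifferentiableAt ℝ (F i) x) (v : Fin n → ℝ) :
    fderiv ℝ (fun x' => ∑ i ∈ s, F i x') x v = ∑ i ∈ s, fderiv ℝ (F i) x v := by
  rw [fderiv_fun_sum hF, ContinuousLinearMap.sum_apply]

theorem Dmul {c d : (Fin n → ℝ) → ℝ} {x : Fin n → ℝ} (hc : DifferentiableAt ℝ c x)
    (hd : DifferentiableAt ℝ d x) (v : Fin n → ℝ) :
    fderiv ℝ (fun x' => c x' * d x') x v
      = c x * fderiv ℝ d x v + d x * fderiv ℝ c x v := by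
  rw [fderiv_fun_mul hc hd]; simp

theorem Dconstmul (a : ℝ) {d : (Fin n → ℝ) → ℝ} {x : Fin n → ℝ}
    (hd : DifferentiableAt ℝ d x) (v : Fin n → ℝ) :
    fderiv ℝ (fun x' => a * d x') x v = a * fderiv ℝ d x v := by
  rw [fderiv_const_mul hd]; simp

/-- symmetry of second derivatives, directional form -/
theorem symm2 {F : Type*} [NormedAddCommGroup F] [NormedSpace ℝ F]
    (h : (Fin n → ℝ) → F) (hh : ContDiff ℝ (⊤:ℕ∞) h) (x v w : Fin n → ℝ) :
    fderiv ℝ (fun z => fderiv ℝ h z v) x w = fderiv ℝ (fun z => fderiv ℝ h z w) x v := by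
  have hd : ContDiff ℝ (⊤:ℕ∞) (fderiv ℝ h) := hh.fderiv_right letop'
  have hdx : DifferentiableAt ℝ (fderiv ℝ h) x := (hd.differentiable onele').differentiableAt
  have hsymm : IsSymmSndFDerivAt ℝ h x := hh.contDiffAt.isSymmSndFDerivAt (by rw [minSmoothness_of_isRCLikeNormedField]; exact twole')
  have h1 : ∀ v w : Fin n → ℝ, fderiv ℝ (fun z => fderiv ℝ h z v) x w
      = fderiv ℝ (fderiv ℝ h) x w v := by
    intro v w
    rw [fderiv_clm_apply hdx (differentiableAt_const v)]
    simp
  rw [h1, h1, hsymm.eq]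

theorem clm_sum (L : (Fin n → ℝ) →L[ℝ] (Fin n → ℝ)) (v : Fin n → ℝ) (lam : Fin n) :
    L v lam = ∑ ρ, v ρ * L (Pi.single ρ 1) lam := by
  have key : ∀ ρ : Fin n, (Pi.single ρ (v ρ) : Fin n → ℝ)
      = v ρ • (Pi.single ρ (1:ℝ) : Fin n → ℝ) := by
    intro ρ; rw [← Pi.single_smul, smul_eq_mul, mul_one]
  conv_lhs => rw [← Finset.univ_sum_single v]
  rw [map_sum, Finset.sum_apply]
  refine Finset.sum_congr rfl fun ρ _ => ?_
  rw [key ρ, map_smul]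
  simp

/-- entries of the Jacobian matrix as functions -/
def Am (n : ℕ) (f : (Fin n → ℝ) → (Fin n → ℝ)) (ρ ν : Fin n) : (Fin n → ℝ) → ℝ :=
  fun x => fderiv ℝ f x (Pi.single ν 1) ρ

/-- second partials as functions -/
def Sm (n : ℕ) (f : (Fin n → ℝ) → (Fin n → ℝ)) (ρ μ ν : Fin n) : (Fin n → ℝ) → ℝ :=
  fun x => fderiv ℝ (Am n f ρ ν) x (Pi.single μ 1)

theorem Sm_eq_secondPartial (f : (Fin n → ℝ) → (Fin n → ℝ)) (ρ μ ν : Fin n) (x : Fin n → ℝ) :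
    Sm n f ρ μ ν x = secondPartial n f ρ μ ν x := rfl

theorem contDiff_Am {f : (Fin n → ℝ) → (Fin n → ℝ)} (hf : ContDiff ℝ (⊤:ℕ∞) f) (ρ ν : Fin n) :
    ContDiff ℝ (⊤:ℕ∞) (Am n f ρ ν) := by
  have h1 : ContDiff ℝ (⊤:ℕ∞) (fderiv ℝ f) := hf.fderiv_right letop'
  exact contDiff_pi.mp (h1.clm_apply contDiff_const) ρ

theorem contDiff_Sm {f : (Fin n → ℝ) → (Fin n → ℝ)} (hf : ContDiff ℝ (⊤:ℕ∞) f) (ρ μ ν : Fin n) :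
    ContDiff ℝ (⊤:ℕ∞) (Sm n f ρ μ ν) := by
  have h1 : ContDiff ℝ (⊤:ℕ∞) (fderiv ℝ (Am n f ρ ν)) := (contDiff_Am hf ρ ν).fderiv_right letop'
  exact h1.clm_apply contDiff_const

theorem Tsym {f : (Fin n → ℝ) → (Fin n → ℝ)} (hf : ContDiff ℝ (⊤:ℕ∞) f) (ρ σ μ ν : Fin n)
    (x : Fin n → ℝ) :
    fderiv ℝ (Sm n f ρ μ ν) x (Pi.single σ 1) = fderiv ℝ (Sm n f ρ σ ν) x (Pi.single μ 1) := by
  have := symm2 (Am n f ρ ν) (contDiff_Am hf ρ ν) x (Pi.single μ 1) (Pi.single σ 1)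
  exact this


/-- entries of the Jacobian of the inverse map, evaluated along `f` -/
def Bm (n : ℕ) (φ : Diffeo n) (lam ρ : Fin n) : (Fin n → ℝ) → ℝ :=
  fun x => fderiv ℝ φ.invFun (φ.toFun x) (Pi.single ρ 1) lam

theorem contDiff_Bm (φ : Diffeo n) (lam ρ : Fin n) : ContDiff ℝ (⊤:ℕ∞) (Bm n φ lam ρ) :=
  (contDiff_Am φ.smooth_invFun lam ρ).comp φ.smooth_toFun

theorem diff_Am (φ : Diffeo n) (ρ ν : Fin n) (x : Fin n → ℝ) :
    DifferentiableAt ℝ (Am n φ.toFun ρ ν) x :=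
  ((contDiff_Am φ.smooth_toFun ρ ν).differentiable onele').differentiableAt

theorem diff_Sm (φ : Diffeo n) (ρ μ ν : Fin n) (x : Fin n → ℝ) :
    DifferentiableAt ℝ (Sm n φ.toFun ρ μ ν) x :=
  ((contDiff_Sm φ.smooth_toFun ρ μ ν).differentiable onele').differentiableAt

theorem diff_Bm (φ : Diffeo n) (lam ρ : Fin n) (x : Fin n → ℝ) :
    DifferentiableAt ℝ (Bm n φ lam ρ) x :=
  ((contDiff_Bm φ lam ρ).differentiable onele').differentiableAt

theorem hBA (φ : Diffeo n) (x : Fin n → ℝ) (lam ν : Fin n) :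
    ∑ ρ, Bm n φ lam ρ x * Am n φ.toFun ρ ν x = if lam = ν then 1 else 0 := by
  have hfd : DifferentiableAt ℝ φ.toFun x :=
    (φ.smooth_toFun.differentiable onele').differentiableAt
  have hgd : DifferentiableAt ℝ φ.invFun (φ.toFun x) :=
    (φ.smooth_invFun.differentiable onele').differentiableAt
  have hcomp : fderiv ℝ (φ.invFun ∘ φ.toFun) x
      = (fderiv ℝ φ.invFun (φ.toFun x)).comp (fderiv ℝ φ.toFun x) :=
    fderiv_comp x hgd hfd
  have hid : (φ.invFun ∘ φ.toFun) = id := by funext z; exact φ.left_inv z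
  rw [hid, fderiv_id] at hcomp
  have h2 := congrArg
    (fun L => (L : (Fin n → ℝ) →L[ℝ] (Fin n → ℝ)) (Pi.single ν 1) lam) hcomp
  simp only [ContinuousLinearMap.id_apply, ContinuousLinearMap.comp_apply] at h2
  rw [clm_sum (fderiv ℝ φ.invFun (φ.toFun x)) (fderiv ℝ φ.toFun x (Pi.single ν 1)) lam] at h2
  rw [Finset.sum_congr rfl fun ρ _ =>
    mul_comm (Bm n φ lam ρ x) (Am n φ.toFun ρ ν x)]
  simp only [Am, Bm]
  rw [← h2, Pi.single_apply]

/-- matrix form: B · A = 1 -/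
theorem BAone (φ : Diffeo n) (x : Fin n → ℝ) :
    (Matrix.of fun lam ρ => Bm n φ lam ρ x) * jacobianM n φ.toFun x = 1 := by
  ext lam ν
  rw [Matrix.mul_apply, Matrix.one_apply]
  exact hBA φ x lam ν

theorem ABone (φ : Diffeo n) (x : Fin n → ℝ) :
    jacobianM n φ.toFun x * (Matrix.of fun lam ρ => Bm n φ lam ρ x) = 1 :=
  mul_eq_one_comm.mp (BAone φ x)

theorem hAB (φ : Diffeo n) (x : Fin n → ℝ) (ρ τ : Fin n) :
    ∑ ν, Am n φ.toFun ρ ν x * Bm n φ ν τ x = if ρ = τ then 1 else 0 := by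
  have := congrArg (fun M => M ρ τ) (ABone φ x)
  simpa [Matrix.mul_apply, Matrix.one_apply, jacobianM, Am, Bm] using this

theorem hJinv (φ : Diffeo n) (x : Fin n → ℝ) (lam ρ : Fin n) :
    (jacobianM n φ.toFun x)⁻¹ lam ρ = Bm n φ lam ρ x := by
  rw [Matrix.inv_eq_left_inv (BAone φ x)]
  rfl


/-- derivative of the inverse-Jacobian entries -/
theorem hDB (φ : Diffeo n) (x : Fin n → ℝ) (σ lam τ : Fin n) :
    fderiv ℝ (Bm n φ lam τ) x (Pi.single σ 1)
      = -∑ ν, ∑ ρ, Bm n φ lam ρ x * Sm n φ.toFun ρ σ ν x * Bm n φ ν τ x := by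
  have key : ∀ ν, ∑ ρ, (Bm n φ lam ρ x * Sm n φ.toFun ρ σ ν x
      + Am n φ.toFun ρ ν x * fderiv ℝ (Bm n φ lam ρ) x (Pi.single σ 1)) = 0 := by
    intro ν
    have hconstf : (fun x' => ∑ ρ, Bm n φ lam ρ x' * Am n φ.toFun ρ ν x')
        = fun _ => (if lam = ν then (1:ℝ) else 0) := funext fun x' => hBA φ x' lam ν
    have h0 : fderiv ℝ (fun x' => ∑ ρ, Bm n φ lam ρ x' * Am n φ.toFun ρ ν x') x
        (Pi.single σ 1) = 0 := by
      rw [hconstf, fderiv_fun_const]; simp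
    rw [Dsum _ _ (fun ρ _ => (diff_Bm φ lam ρ x).fun_mul (diff_Am φ ρ ν x))] at h0
    rw [Finset.sum_congr rfl fun ρ _ => Dmul (diff_Bm φ lam ρ x) (diff_Am φ ρ ν x)
      (Pi.single σ 1)] at h0
    exact h0
  have step1 : fderiv ℝ (Bm n φ lam τ) x (Pi.single σ 1)
      = ∑ ρ, fderiv ℝ (Bm n φ lam ρ) x (Pi.single σ 1) * (if ρ = τ then (1:ℝ) else 0) := by
    simp [mul_ite, mul_one, mul_zero, Finset.sum_ite_eq']
  rw [step1]
  rw [Finset.sum_congr rfl fun ρ _ => by rw [← hAB φ x ρ τ]]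
  have step2 : ∑ ρ, fderiv ℝ (Bm n φ lam ρ) x (Pi.single σ 1)
        * (∑ ν, Am n φ.toFun ρ ν x * Bm n φ ν τ x)
      = ∑ ν, (∑ ρ, Am n φ.toFun ρ ν x * fderiv ℝ (Bm n φ lam ρ) x (Pi.single σ 1))
        * Bm n φ ν τ x := by
    rw [Finset.sum_congr rfl fun ρ _ => Finset.mul_sum _ _ _]
    rw [Finset.sum_comm]
    refine Finset.sum_congr rfl fun ν _ => ?_
    rw [Finset.sum_mul]
    exact Finset.sum_congr rfl fun ρ _ => by ring
  rw [step2]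
  have step3 : ∀ ν, ∑ ρ, Am n φ.toFun ρ ν x * fderiv ℝ (Bm n φ lam ρ) x (Pi.single σ 1)
      = -∑ ρ, Bm n φ lam ρ x * Sm n φ.toFun ρ σ ν x := by
    intro ν
    have := key ν
    rw [Finset.sum_add_distrib] at this
    linarith
  rw [Finset.sum_congr rfl fun ν _ => by rw [step3 ν]]
  rw [← Finset.sum_neg_distrib]
  refine Finset.sum_congr rfl fun ν _ => ?_
  rw [neg_mul, Finset.sum_mul]


theorem gamma_eq (φ : Diffeo n) (i j k : Fin n) (x : Fin n → ℝ) (y : Fin n → Fin n → ℝ) :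
    gammaFn n φ.toFun i j k x y
      = ∑ lam, ∑ ρ, ∑ μ, ∑ ν, (Matrix.of y)⁻¹ i lam * Bm n φ lam ρ x
          * Sm n φ.toFun ρ μ ν x * y ν j * y μ k := by
  simp only [gammaFn, hJinv, Sm_eq_secondPartial]

theorem Dterm (a b1 b2 : ℝ) {u v : (Fin n → ℝ) → ℝ} {x : Fin n → ℝ}
    (hu : DifferentiableAt ℝ u x) (hv : DifferentiableAt ℝ v x) (w : Fin n → ℝ) :
    fderiv ℝ (fun x' => a * u x' * v x' * b1 * b2) x w
      = a * b1 * b2 * (u x * fderiv ℝ v x w + v x * fderiv ℝ u x w) := by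
  have h : (fun x' => a * u x' * v x' * b1 * b2)
      = fun x' => a * b1 * b2 * (u x' * v x') := by funext x'; ring
  rw [h, Dconstmul (a * b1 * b2) (hu.fun_mul hv), Dmul hu hv]

theorem Dgamma (φ : Diffeo n) (i j k σ : Fin n) (x : Fin n → ℝ) (y : Fin n → Fin n → ℝ) :
    fderiv ℝ (fun x' => gammaFn n φ.toFun i j k x' y) x (Pi.single σ 1)
      = ∑ lam, ∑ ρ, ∑ μ, ∑ ν, (Matrix.of y)⁻¹ i lam * y ν j * y μ k *
          (Bm n φ lam ρ x * fderiv ℝ (Sm n φ.toFun ρ μ ν) x (Pi.single σ 1)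
            + Sm n φ.toFun ρ μ ν x * fderiv ℝ (Bm n φ lam ρ) x (Pi.single σ 1)) := by
  have hfun : (fun x' => gammaFn n φ.toFun i j k x' y)
      = fun x' => ∑ lam, ∑ ρ, ∑ μ, ∑ ν, (Matrix.of y)⁻¹ i lam * Bm n φ lam ρ x'
          * Sm n φ.toFun ρ μ ν x' * y ν j * y μ k :=
    funext fun x' => gamma_eq φ i j k x' y
  have hd0 : ∀ (lam ρ μ ν : Fin n) (x' : Fin n → ℝ), DifferentiableAt ℝ
      (fun x'' => (Matrix.of y)⁻¹ i lam * Bm n φ lam ρ x''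
        * Sm n φ.toFun ρ μ ν x'' * y ν j * y μ k) x' := fun lam ρ μ ν x' =>
    ((((diff_Bm φ lam ρ x').const_mul _).mul (diff_Sm φ ρ μ ν x')).mul_const _).mul_const _
  rw [hfun]
  rw [Dsum _ _ (fun lam _ => by
    exact DifferentiableAt.fun_sum fun ρ _ => DifferentiableAt.fun_sum fun μ _ =>
      DifferentiableAt.fun_sum fun ν _ => hd0 lam ρ μ ν x)]
  refine Finset.sum_congr rfl fun lam _ => ?_
  rw [Dsum _ _ (fun ρ _ => by
    exact DifferentiableAt.fun_sum fun μ _ => DifferentiableAt.fun_sum fun ν _ => hd0 lam ρ μ ν x)]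
  refine Finset.sum_congr rfl fun ρ _ => ?_
  rw [Dsum _ _ (fun μ _ => by exact DifferentiableAt.fun_sum fun ν _ => hd0 lam ρ μ ν x)]
  refine Finset.sum_congr rfl fun μ _ => ?_
  rw [Dsum _ _ (fun ν _ => hd0 lam ρ μ ν x)]
  refine Finset.sum_congr rfl fun ν _ => ?_
  exact Dterm _ _ _ (diff_Bm φ lam ρ x) (diff_Sm φ ρ μ ν x) _


/-- reorder a quadruple sum: (a,b,c,d) ↦ (c,d,a,b) -/
theorem reorder4 {M : Type*} [AddCommMonoid M] (F : Fin n → Fin n → Fin n → Fin n → M) :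
    ∑ a, ∑ b, ∑ c, ∑ d, F a b c d = ∑ c, ∑ d, ∑ a, ∑ b, F a b c d :=
  calc ∑ a, ∑ b, ∑ c, ∑ d, F a b c d
      = ∑ a, ∑ c, ∑ b, ∑ d, F a b c d :=
        Finset.sum_congr rfl fun a _ => Finset.sum_comm
    _ = ∑ c, ∑ a, ∑ b, ∑ d, F a b c d := Finset.sum_comm
    _ = ∑ c, ∑ a, ∑ d, ∑ b, F a b c d :=
        Finset.sum_congr rfl fun c _ => Finset.sum_congr rfl fun a _ => Finset.sum_comm
    _ = ∑ c, ∑ d, ∑ a, ∑ b, F a b c d :=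
        Finset.sum_congr rfl fun c _ => Finset.sum_comm

def BX (n : ℕ) (φ : Diffeo n) (x : Fin n → ℝ) : Matrix (Fin n) (Fin n) ℝ :=
  Matrix.of fun lam ρ => Bm n φ lam ρ x

def SX (n : ℕ) (φ : Diffeo n) (μ : Fin n) (x : Fin n → ℝ) : Matrix (Fin n) (Fin n) ℝ :=
  Matrix.of fun ρ ν => Sm n φ.toFun ρ μ ν x

def TX (n : ℕ) (φ : Diffeo n) (σ μ : Fin n) (x : Fin n → ℝ) : Matrix (Fin n) (Fin n) ℝ :=
  Matrix.of fun ρ ν => fderiv ℝ (Sm n φ.toFun ρ μ ν) x (Pi.single σ 1)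

def GX (n : ℕ) (φ : Diffeo n) (μ : Fin n) (x : Fin n → ℝ) : Matrix (Fin n) (Fin n) ℝ :=
  BX n φ x * SX n φ μ x

def MX (n : ℕ) (φ : Diffeo n) (μ : Fin n) (x : Fin n → ℝ) (y : Fin n → Fin n → ℝ) :
    Matrix (Fin n) (Fin n) ℝ :=
  (Matrix.of y)⁻¹ * GX n φ μ x * Matrix.of y

theorem TXsym (φ : Diffeo n) (σ μ : Fin n) (x : Fin n → ℝ) :
    TX n φ σ μ x = TX n φ μ σ x := by
  ext ρ ν
  exact Tsym φ.smooth_toFun ρ σ μ ν x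

theorem gammaM (φ : Diffeo n) (a b c : Fin n) (x : Fin n → ℝ) (y : Fin n → Fin n → ℝ) :
    gammaFn n φ.toFun a b c x y = ∑ μ, y μ c * MX n φ μ x y a b := by
  rw [gamma_eq]
  simp only [MX, GX, BX, SX, Matrix.mul_apply, Matrix.of_apply, Finset.sum_mul,
    Finset.mul_sum]
  rw [reorder4]
  exact Finset.sum_congr rfl fun μ _ => Finset.sum_congr rfl fun ν _ =>
    Finset.sum_congr rfl fun lam _ => Finset.sum_congr rfl fun ρ _ => by ring


theorem reorder3 {M : Type*} [AddCommMonoid M] (F : Fin n → Fin n → Fin n → M) :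
    ∑ a, ∑ b, ∑ c, F a b c = ∑ c, ∑ a, ∑ b, F a b c :=
  calc ∑ a, ∑ b, ∑ c, F a b c
      = ∑ a, ∑ c, ∑ b, F a b c := Finset.sum_congr rfl fun a _ => Finset.sum_comm
    _ = ∑ c, ∑ a, ∑ b, F a b c := Finset.sum_comm

theorem hDBG (φ : Diffeo n) (x : Fin n → ℝ) (σ lam μ ν : Fin n) :
    ∑ ρ, Sm n φ.toFun ρ μ ν x * fderiv ℝ (Bm n φ lam ρ) x (Pi.single σ 1)
      = -(GX n φ σ x * GX n φ μ x) lam ν := by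
  rw [Finset.sum_congr rfl fun ρ _ => by rw [hDB φ x σ lam ρ]]
  simp only [GX, BX, SX, Matrix.mul_apply, Matrix.of_apply, Finset.sum_mul, Finset.mul_sum,
    mul_neg, neg_mul, Finset.sum_neg_distrib, neg_neg]
  refine congrArg Neg.neg ?_
  rw [Finset.sum_comm]
  exact Finset.sum_congr rfl fun α _ => Finset.sum_congr rfl fun ρ _ =>
    Finset.sum_congr rfl fun ρ' _ => by ring


theorem derivM (φ : Diffeo n) (a b c σ : Fin n) (x : Fin n → ℝ) (y : Fin n → Fin n → ℝ) :
    fderiv ℝ (fun x' => gammaFn n φ.toFun a b c x' y) x (Pi.single σ 1)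
      = (∑ μ, y μ c * ((Matrix.of y)⁻¹ * (BX n φ x * TX n φ σ μ x) * Matrix.of y) a b)
        - ∑ μ, y μ c * ((Matrix.of y)⁻¹ * (GX n φ σ x * GX n φ μ x) * Matrix.of y) a b := by
  rw [Dgamma]
  simp only [mul_add, Finset.sum_add_distrib]
  have h1 : (∑ lam, ∑ ρ, ∑ μ, ∑ ν, (Matrix.of y)⁻¹ a lam * y ν b * y μ c *
        (Bm n φ lam ρ x * fderiv ℝ (Sm n φ.toFun ρ μ ν) x (Pi.single σ 1)))
      = ∑ μ, y μ c * ((Matrix.of y)⁻¹ * (BX n φ x * TX n φ σ μ x) * Matrix.of y) a b := by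
    simp only [BX, TX, Matrix.mul_apply, Matrix.of_apply, Finset.sum_mul, Finset.mul_sum]
    rw [reorder4]
    exact Finset.sum_congr rfl fun μ _ => Finset.sum_congr rfl fun ν _ =>
      Finset.sum_congr rfl fun lam _ => Finset.sum_congr rfl fun ρ _ => by ring
  have h2 : (∑ lam, ∑ ρ, ∑ μ, ∑ ν, (Matrix.of y)⁻¹ a lam * y ν b * y μ c *
        (Sm n φ.toFun ρ μ ν x * fderiv ℝ (Bm n φ lam ρ) x (Pi.single σ 1)))
      = -∑ μ, y μ c * ((Matrix.of y)⁻¹ * (GX n φ σ x * GX n φ μ x) * Matrix.of y) a b := by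
    rw [reorder4]
    have hL : ∀ μ ν lam : Fin n,
        (∑ ρ, (Matrix.of y)⁻¹ a lam * y ν b * y μ c *
          (Sm n φ.toFun ρ μ ν x * fderiv ℝ (Bm n φ lam ρ) x (Pi.single σ 1)))
        = -((Matrix.of y)⁻¹ a lam * y ν b * y μ c * (GX n φ σ x * GX n φ μ x) lam ν) := by
      intro μ ν lam
      rw [← Finset.mul_sum, hDBG φ x σ lam μ ν, mul_neg]
    rw [Finset.sum_congr rfl fun μ _ => Finset.sum_congr rfl fun ν _ =>
      Finset.sum_congr rfl fun lam _ => hL μ ν lam]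
    simp only [Matrix.mul_apply, Matrix.of_apply, Finset.sum_mul, Finset.mul_sum,
      mul_neg, neg_mul, Finset.sum_neg_distrib]
    refine congrArg Neg.neg ?_
    exact Finset.sum_congr rfl fun μ _ => Finset.sum_congr rfl fun ν _ =>
      Finset.sum_congr rfl fun lam _ => Finset.sum_congr rfl fun α _ => by ring
  rw [h1, h2, ← sub_eq_add_neg]


theorem hMM (φ : Diffeo n) (x : Fin n → ℝ) (y : Fin n → Fin n → ℝ)
    (hy : IsUnit (Matrix.of y)) (μ σ : Fin n) :
    MX n φ μ x y * MX n φ σ x y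
      = (Matrix.of y)⁻¹ * (GX n φ μ x * GX n φ σ x) * Matrix.of y := by
  have hYYi : Matrix.of y * (Matrix.of y)⁻¹ = 1 :=
    Matrix.mul_nonsing_inv _ ((Matrix.isUnit_iff_isUnit_det _).mp hy)
  simp only [MX]
  calc (Matrix.of y)⁻¹ * GX n φ μ x * Matrix.of y * ((Matrix.of y)⁻¹ * GX n φ σ x * Matrix.of y)
      = (Matrix.of y)⁻¹ * GX n φ μ x * (Matrix.of y * (Matrix.of y)⁻¹) * (GX n φ σ x * Matrix.of y) := by
        noncomm_ring
    _ = (Matrix.of y)⁻¹ * (GX n φ μ x * GX n φ σ x) * Matrix.of y := by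
        rw [hYYi, mul_one]; noncomm_ring

theorem stmt6' (φ : Diffeo n) (i j k ℓ : Fin n) (x : Fin n → ℝ)
    (y : Fin n → Fin n → ℝ) (hy : IsUnit (Matrix.of y)) :
    (∑ μ : Fin n, y μ k *
        fderiv ℝ (fun x' => gammaFn n φ.toFun i j ℓ x' y) x (Pi.single μ 1))
      - (∑ μ : Fin n, y μ ℓ *
          fderiv ℝ (fun x' => gammaFn n φ.toFun i j k x' y) x (Pi.single μ 1))
      = ∑ s : Fin n,
          (gammaFn n φ.toFun s j k x y * gammaFn n φ.toFun i s ℓ x y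
            - gammaFn n φ.toFun s j ℓ x y * gammaFn n φ.toFun i s k x y) := by
  simp only [derivM φ _ _ _ _ x y]
  simp only [gammaM, mul_sub, Finset.sum_sub_distrib]
  have key : ∀ c d : Fin n,
      (∑ s, (∑ σ, y σ c * MX n φ σ x y s j) * ∑ μ, y μ d * MX n φ μ x y i s)
      = ∑ σ, ∑ μ, y σ c * y μ d
          * ((Matrix.of y)⁻¹ * (GX n φ μ x * GX n φ σ x) * Matrix.of y) i j := by
    intro c d
    have inner : ∀ σ μ : Fin n,
        (∑ s, (y σ c * MX n φ σ x y s j) * (y μ d * MX n φ μ x y i s))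
        = y σ c * y μ d * ((Matrix.of y)⁻¹ * (GX n φ μ x * GX n φ σ x) * Matrix.of y) i j := by
      intro σ μ
      calc (∑ s, (y σ c * MX n φ σ x y s j) * (y μ d * MX n φ μ x y i s))
          = ∑ s, (y σ c * y μ d) * (MX n φ μ x y i s * MX n φ σ x y s j) :=
            Finset.sum_congr rfl fun s _ => by ring
        _ = (y σ c * y μ d) * ∑ s, MX n φ μ x y i s * MX n φ σ x y s j :=
            (Finset.mul_sum _ _ _).symm
        _ = (y σ c * y μ d) * (MX n φ μ x y * MX n φ σ x y) i j := by
            rw [Matrix.mul_apply]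
        _ = y σ c * y μ d * ((Matrix.of y)⁻¹ * (GX n φ μ x * GX n φ σ x) * Matrix.of y) i j := by
            rw [hMM φ x y hy μ σ]
    rw [Finset.sum_congr rfl fun s _ => Finset.sum_mul_sum Finset.univ Finset.univ _ _]
    rw [reorder3, reorder3]
    exact Finset.sum_congr rfl fun σ _ => Finset.sum_congr rfl fun μ _ => inner σ μ
  rw [key k ℓ, key ℓ k]
  have hPcan : (∑ σ, y σ k * ∑ μ, y μ ℓ
        * ((Matrix.of y)⁻¹ * (BX n φ x * TX n φ σ μ x) * Matrix.of y) i j)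
      = ∑ σ, y σ ℓ * ∑ μ, y μ k
        * ((Matrix.of y)⁻¹ * (BX n φ x * TX n φ σ μ x) * Matrix.of y) i j := by
    simp only [Finset.mul_sum]
    rw [Finset.sum_comm]
    refine Finset.sum_congr rfl fun σ _ => Finset.sum_congr rfl fun μ _ => ?_
    rw [TXsym φ μ σ x]
    ring
  have hR1 : (∑ σ, ∑ μ, y σ k * y μ ℓ
        * ((Matrix.of y)⁻¹ * (GX n φ μ x * GX n φ σ x) * Matrix.of y) i j)
      = ∑ σ, y σ ℓ * ∑ μ, y μ k
        * ((Matrix.of y)⁻¹ * (GX n φ σ x * GX n φ μ x) * Matrix.of y) i j := by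
    simp only [Finset.mul_sum]
    rw [Finset.sum_comm]
    exact Finset.sum_congr rfl fun σ _ => Finset.sum_congr rfl fun μ _ => by ring
  have hR2 : (∑ σ, ∑ μ, y σ ℓ * y μ k
        * ((Matrix.of y)⁻¹ * (GX n φ μ x * GX n φ σ x) * Matrix.of y) i j)
      = ∑ σ, y σ k * ∑ μ, y μ ℓ
        * ((Matrix.of y)⁻¹ * (GX n φ σ x * GX n φ μ x) * Matrix.of y) i j := by
    simp only [Finset.mul_sum]
    rw [Finset.sum_comm]
    exact Finset.sum_congr rfl fun σ _ => Finset.sum_congr rfl fun μ _ => by ring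
  rw [hR1, hR2, hPcan]
  ring

end BianchiAux

/-- **Bianchi identity**: `X_k(γ^i_{jℓ}(φ)) − X_ℓ(γ^i_{jk}(φ))
  = Σ_s (γ^s_{jk}(φ)γ^i_{sℓ}(φ) − γ^s_{jℓ}(φ)γ^i_{sk}(φ))`,
where `X_k f(x,y) = Σ_μ y^μ_k ∂f/∂x^μ`. -/
theorem stmt6 (n : ℕ) (φ : Diffeo n) (i j k ℓ : Fin n) (x : Fin n → ℝ)
    (y : Fin n → Fin n → ℝ) (hy : IsUnit (Matrix.of y)) :
    (∑ μ : Fin n, y μ k *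
        fderiv ℝ (fun x' => gammaFn n φ.toFun i j ℓ x' y) x (Pi.single μ 1))
      - (∑ μ : Fin n, y μ ℓ *
          fderiv ℝ (fun x' => gammaFn n φ.toFun i j k x' y) x (Pi.single μ 1))
      = ∑ s : Fin n,
          (gammaFn n φ.toFun s j k x y * gammaFn n φ.toFun i s ℓ x y
            - gammaFn n φ.toFun s j ℓ x y * gammaFn n φ.toFun i s k x y) :=
  BianchiAux.stmt6' φ i j k ℓ x y hy
end
end

section
/- Let ψ be a diffeomorphism of ℝⁿ with ψ(0) = 0 and Dψ(0) = Id. For 1 ≤ i,j,k,ℓ ≤ n, the derivative at 0 in the direction e_ℓ of the function x ↦ Σ_ν (Dψ(x)⁻¹)^i_ν · ∂_j∂_kψ^ν(x) equals ∂_ℓ∂_j∂_kψ^i(0) − Σ_ν ∂_ℓ∂_νψ^i(0) · ∂_j∂_kψ^ν(0). (In the paper's notation, η^i_{jkℓ}(ψ) = α^i_{jkℓ}(ψ) − Σ_ν α^i_{ℓν}(ψ)·α^ν_{jk}(ψ).) -/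
set_option synthInstance.maxHeartbeats 1000000
set_option maxHeartbeats 2000000

noncomputable section

/-- matrix of a CLM -/
def clmToMatrix (n : ℕ) : ((Fin n → ℝ) →L[ℝ] (Fin n → ℝ)) →+* Matrix (Fin n) (Fin n) ℝ :=
  (LinearMap.toMatrixAlgEquiv' : ((Fin n → ℝ) →ₗ[ℝ] (Fin n → ℝ)) ≃ₐ[ℝ] _).toRingEquiv.toRingHom.comp
    (ContinuousLinearMap.toLinearMapRingHom)

lemma clmToMatrix_apply (n : ℕ) (A : (Fin n → ℝ) →L[ℝ] (Fin n → ℝ)) (i j : Fin n) :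
    clmToMatrix n A i j = A (Pi.single j 1) i := by
  have h : (Pi.single j 1 : Fin n → ℝ) = fun j' => if j' = j then 1 else 0 := by
    ext j'; simp [Pi.single_apply]
  simp [clmToMatrix, LinearMap.toMatrixAlgEquiv'_apply, LinearMap.toMatrix'_apply, h]

lemma jacobianM_eq (n : ℕ) (f : (Fin n → ℝ) → (Fin n → ℝ)) (x : Fin n → ℝ) :
    jacobianM n f x = clmToMatrix n (fderiv ℝ f x) := by
  ext i j; rw [clmToMatrix_apply]; rfl

lemma diffeo_fderiv_isUnit (n : ℕ) (ψ : Diffeo n) (x : Fin n → ℝ) :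
    ∃ u : ((Fin n → ℝ) →L[ℝ] (Fin n → ℝ))ˣ, (u : _) = fderiv ℝ ψ.toFun x := by
  set T := fderiv ℝ ψ.toFun x with hT
  set S := fderiv ℝ ψ.invFun (ψ.toFun x) with hS
  have hA : HasFDerivAt ψ.toFun T x :=
    ((ψ.smooth_toFun.differentiable (by simp)) x).hasFDerivAt
  have hB : HasFDerivAt ψ.invFun S (ψ.toFun x) :=
    ((ψ.smooth_invFun.differentiable (by simp)) (ψ.toFun x)).hasFDerivAt
  have hid1 : (ψ.invFun ∘ ψ.toFun) = id := funext ψ.left_inv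
  have hid2 : (ψ.toFun ∘ ψ.invFun) = id := funext ψ.right_inv
  have h1 : HasFDerivAt (ψ.invFun ∘ ψ.toFun) (S.comp T) x := hB.comp x hA
  rw [hid1] at h1
  have hST : S.comp T = ContinuousLinearMap.id ℝ _ := h1.unique (hasFDerivAt_id x)
  have hA' : HasFDerivAt ψ.toFun T (ψ.invFun (ψ.toFun x)) := by
    rw [ψ.left_inv x]; exact hA
  have h2 : HasFDerivAt (ψ.toFun ∘ ψ.invFun) (T.comp S) (ψ.toFun x) := hA'.comp _ hB
  rw [hid2] at h2
  have hTS : T.comp S = ContinuousLinearMap.id ℝ _ := h2.unique (hasFDerivAt_id _)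
  exact ⟨⟨T, S, hTS, hST⟩, rfl⟩

lemma jacobian_inv_entry (n : ℕ) (ψ : Diffeo n) (x : Fin n → ℝ) (i ν : Fin n) :
    (jacobianM n ψ.toFun x)⁻¹ i ν
      = Ring.inverse (fderiv ℝ ψ.toFun x) (Pi.single ν 1) i := by
  obtain ⟨u, hu⟩ := diffeo_fderiv_isUnit n ψ x
  have h1 : (jacobianM n ψ.toFun x)⁻¹ = clmToMatrix n (↑u⁻¹) := by
    apply Matrix.inv_eq_right_inv
    rw [jacobianM_eq, ← hu, ← map_mul, Units.mul_inv, map_one]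
  rw [h1, ← hu, Ring.inverse_unit, clmToMatrix_apply]

/-- For a diffeomorphism `ψ` of `ℝⁿ` with `ψ(0) = 0`, `Dψ(0) = Id`, the derivative at
`0` in the direction `e_ℓ` of `x ↦ Σ_ν (Dψ(x)⁻¹)^i_ν ∂ⱼ∂ₖψ^ν(x)` equals
`∂_ℓ∂ⱼ∂ₖψ^i(0) − Σ_ν ∂_ℓ∂_νψ^i(0)·∂ⱼ∂ₖψ^ν(0)`;
in the paper's notation, `η^i_{jkℓ} = α^i_{jkℓ} − Σ_ν α^i_{ℓν}·α^ν_{jk}`. -/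
theorem stmt10 (n : ℕ) (ψ : Diffeo n)
    (hz : ψ.toFun 0 = 0)
    (hd : fderiv ℝ ψ.toFun 0 = ContinuousLinearMap.id ℝ (Fin n → ℝ))
    (i j k ℓ : Fin n) :
    fderiv ℝ (fun x => ∑ ν : Fin n,
        (jacobianM n ψ.toFun x)⁻¹ i ν * secondPartial n ψ.toFun ν j k x) 0
        (Pi.single ℓ 1)
      = fderiv ℝ (fun x => secondPartial n ψ.toFun i j k x) 0 (Pi.single ℓ 1)
        - ∑ ν : Fin n,
            secondPartial n ψ.toFun i ℓ ν 0 * secondPartial n ψ.toFun ν j k 0 := by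

  classical
  have hFc : ContDiff ℝ (⊤ : ℕ∞) (fderiv ℝ ψ.toFun) :=
    ψ.smooth_toFun.fderiv_right (mod_cast le_top)
  have hFd : DifferentiableAt ℝ (fderiv ℝ ψ.toFun) 0 :=
    (hFc.differentiable (by simp)) 0
  have hF0 : fderiv ℝ ψ.toFun 0 = (1 : (Fin n → ℝ) →L[ℝ] (Fin n → ℝ)) := by
    rw [hd]; rfl
  -- evaluation CLMs
  set Φ : Fin n → (((Fin n → ℝ) →L[ℝ] (Fin n → ℝ)) →L[ℝ] ℝ) := fun ν =>
    (ContinuousLinearMap.proj i).comp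
      (ContinuousLinearMap.apply ℝ (Fin n → ℝ) (Pi.single ν 1)) with hΦ
  -- derivative of the inverse-of-jacobian map
  have hGinv : HasFDerivAt (Ring.inverse : ((Fin n → ℝ) →L[ℝ] (Fin n → ℝ)) → _)
      (-(ContinuousLinearMap.mulLeftRight ℝ _ 1 1)) (fderiv ℝ ψ.toFun 0) := by
    rw [hF0]
    simpa using hasFDerivAt_ringInverse (𝕜 := ℝ)
      (1 : ((Fin n → ℝ) →L[ℝ] (Fin n → ℝ))ˣ)
  have hG : HasFDerivAt (fun x => Ring.inverse (fderiv ℝ ψ.toFun x))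
      ((-(ContinuousLinearMap.mulLeftRight ℝ _ 1 1)).comp (fderiv ℝ (fderiv ℝ ψ.toFun) 0))
      0 := hGinv.comp 0 hFd.hasFDerivAt
  have hH : ∀ ν, HasFDerivAt (fun x => Ring.inverse (fderiv ℝ ψ.toFun x) (Pi.single ν 1) i)
      ((Φ ν).comp ((-(ContinuousLinearMap.mulLeftRight ℝ _ 1 1)).comp
        (fderiv ℝ (fderiv ℝ ψ.toFun) 0))) 0 := fun ν =>
    (Φ ν).hasFDerivAt.comp 0 hG
  -- smoothness of second partials
  have hgc : ∀ ν, ContDiff ℝ (⊤ : ℕ∞) (fun z => fderiv ℝ ψ.toFun z (Pi.single k 1) ν) :=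
    fun ν => contDiff_pi.mp (hFc.clm_apply contDiff_const) ν
  have hSd : ∀ ν, DifferentiableAt ℝ (fun x => secondPartial n ψ.toFun ν j k x) 0 := by
    intro ν
    simp only [secondPartial]
    exact ((((ContinuousLinearMap.apply ℝ ℝ (Pi.single j 1)).contDiff).comp
      ((hgc ν).fderiv_right (m := (⊤:ℕ∞)) (by simp))).differentiable (by simp)) 0
  have hS : ∀ ν, HasFDerivAt (fun x => secondPartial n ψ.toFun ν j k x)
      (fderiv ℝ (fun x => secondPartial n ψ.toFun ν j k x) 0) 0 :=
    fun ν => (hSd ν).hasFDerivAt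
  -- rewrite the function under fderiv
  have hfun : (fun x => ∑ ν : Fin n,
        (jacobianM n ψ.toFun x)⁻¹ i ν * secondPartial n ψ.toFun ν j k x)
      = fun x => ∑ ν : Fin n,
        (Ring.inverse (fderiv ℝ ψ.toFun x) (Pi.single ν 1) i) *
          secondPartial n ψ.toFun ν j k x := by
    funext x
    exact Finset.sum_congr rfl fun ν _ => by rw [jacobian_inv_entry]
  rw [hfun]
  -- main derivative computation
  have hmain : HasFDerivAt (fun x => ∑ ν : Fin n,
        (Ring.inverse (fderiv ℝ ψ.toFun x) (Pi.single ν 1) i) *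
          secondPartial n ψ.toFun ν j k x)
      (∑ ν : Fin n,
        ((Ring.inverse (fderiv ℝ ψ.toFun 0) (Pi.single ν 1) i) •
            (fderiv ℝ (fun x => secondPartial n ψ.toFun ν j k x) 0)
          + (secondPartial n ψ.toFun ν j k 0) •
            ((Φ ν).comp ((-(ContinuousLinearMap.mulLeftRight ℝ _ 1 1)).comp
              (fderiv ℝ (fderiv ℝ ψ.toFun) 0))))) 0 :=
    HasFDerivAt.fun_sum fun ν _ => (hH ν).mul (hS ν)
  rw [hmain.fderiv]
  -- identify the third-derivative entries
  have hthird : ∀ ν, (fderiv ℝ (fderiv ℝ ψ.toFun) 0 (Pi.single ℓ 1)) (Pi.single ν 1) i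
      = secondPartial n ψ.toFun i ℓ ν 0 := by
    intro ν
    have h : fderiv ℝ (fun z => (Φ ν) (fderiv ℝ ψ.toFun z)) 0
        = (Φ ν).comp (fderiv ℝ (fderiv ℝ ψ.toFun) 0) :=
      ((Φ ν).hasFDerivAt.comp 0 hFd.hasFDerivAt).fderiv
    have hentry : (fun z => (Φ ν) (fderiv ℝ ψ.toFun z))
        = fun z => fderiv ℝ ψ.toFun z (Pi.single ν 1) i := rfl
    rw [secondPartial, ← hentry, h]
    rfl
  -- compute H ν 0
  have hH0 : ∀ ν : Fin n, Ring.inverse (fderiv ℝ ψ.toFun 0) (Pi.single ν 1) i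
      = if i = ν then 1 else 0 := by
    intro ν
    rw [hF0, Ring.inverse_one]
    simp [Pi.single_apply]
  simp only [ContinuousLinearMap.sum_apply, ContinuousLinearMap.add_apply,
    ContinuousLinearMap.smul_apply, ContinuousLinearMap.comp_apply,
    ContinuousLinearMap.neg_apply, ContinuousLinearMap.mulLeftRight_apply,
    one_mul, mul_one, hH0]
  have hΦval : ∀ ν, (Φ ν) (-(fderiv ℝ (fderiv ℝ ψ.toFun) 0 (Pi.single ℓ 1)))
      = -secondPartial n ψ.toFun i ℓ ν 0 := by
    intro ν
    rw [← hthird ν]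
    rfl
  simp only [hΦval]
  rw [Finset.sum_add_distrib, sub_eq_add_neg]
  congr 1
  · simp [ite_smul, one_smul, zero_smul]
  · rw [← Finset.sum_neg_distrib]
    exact Finset.sum_congr rfl fun ν _ => by simp [smul_eq_mul]; ring
end
end

section
/- For a diffeomorphism φ of ℝⁿ define recursively γ^i_{jk,ℓ₁…ℓ_r}(φ) := X_{ℓ_r}( γ^i_{jk,ℓ₁…ℓ_{r−1}}(φ) ), starting from γ^i_{jk}(φ), where X_ℓ f(x,y) = Σ_μ y^μ_ℓ ∂f/∂x^μ. Then for every invertible affine transformation φ_aff of ℝⁿ, every diffeomorphism φ of ℝⁿ, all indices and all r ≥ 0: (i) γ^i_{jk,ℓ₁…ℓ_r}(φ_aff ∘ φ) = γ^i_{jk,ℓ₁…ℓ_r}(φ) as functions on ℝⁿ × GL(n,ℝ); (ii) γ^i_{jk,ℓ₁…ℓ_r}(φ ∘ φ_aff) = γ^i_{jk,ℓ₁…ℓ_r}(φ) ∘ φ̃_aff, where φ̃_aff(x,y) = (φ_aff(x), φ_aff'(x)·y). -/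
noncomputable section

/-- The horizontal derivative operator `X_ℓ f(x,y) = Σ_μ y^μ_ℓ ∂f/∂x^μ (x,y)`. -/
def Xop (n : ℕ) (ℓ : Fin n) (f : (Fin n → ℝ) → (Fin n → Fin n → ℝ) → ℝ) :
    (Fin n → ℝ) → (Fin n → Fin n → ℝ) → ℝ :=
  fun x y => ∑ μ : Fin n, y μ ℓ * fderiv ℝ (fun x' => f x' y) x (Pi.single μ 1)

/-- The higher cocycles `γ^i_{jk,ℓ₁…ℓ_r}(φ) := X_{ℓ_r}(⋯ X_{ℓ₁}(γ^i_{jk}(φ)) ⋯)`,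
indexed by a list of horizontal derivative directions. -/
def gammaIter (n : ℕ) (f : (Fin n → ℝ) → (Fin n → ℝ)) (i j k : Fin n) :
    List (Fin n) → (Fin n → ℝ) → (Fin n → Fin n → ℝ) → ℝ
  | [] => fun x y => gammaFn n f i j k x y
  | ℓ :: rest => Xop n ℓ (gammaIter n f i j k rest)


namespace S11
variable {n : ℕ}

def Lc (A : Matrix (Fin n) (Fin n) ℝ) : (Fin n → ℝ) →L[ℝ] (Fin n → ℝ) :=
  LinearMap.toContinuousLinearMap (Matrix.mulVecLin A)

lemma Lc_apply (A : Matrix (Fin n) (Fin n) ℝ) (v : Fin n → ℝ) : Lc A v = A.mulVec v := rfl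

lemma hasFDerivAt_affine (A : Matrix (Fin n) (Fin n) ℝ) (b x : Fin n → ℝ) :
    HasFDerivAt (fun z => A.mulVec z + b) (Lc A) x := by
  exact ((Lc A).hasFDerivAt (x := x)).add_const b

lemma fderiv_leftcomp (A : Matrix (Fin n) (Fin n) ℝ) (b : Fin n → ℝ)
    {f : (Fin n → ℝ) → (Fin n → ℝ)} {x : Fin n → ℝ} (hf : DifferentiableAt ℝ f x) :
    fderiv ℝ (fun z => A.mulVec (f z) + b) x = (Lc A).comp (fderiv ℝ f x) := by
  have h1 : HasFDerivAt (fun z => Lc A (f z) + b) ((Lc A).comp (fderiv ℝ f x)) x :=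
    ((Lc A).hasFDerivAt.comp x hf.hasFDerivAt).add_const b
  have h2 : (fun z => Lc A (f z) + b) = fun z => A.mulVec (f z) + b := by
    funext z; rw [Lc_apply]
  rw [← h2]; exact h1.fderiv

lemma fderiv_rightcomp (A : Matrix (Fin n) (Fin n) ℝ) (b : Fin n → ℝ)
    {E : Type*} [NormedAddCommGroup E] [NormedSpace ℝ E]
    {f : (Fin n → ℝ) → E} {x : Fin n → ℝ} (hf : DifferentiableAt ℝ f (A.mulVec x + b)) :
    fderiv ℝ (fun z => f (A.mulVec z + b)) x = (fderiv ℝ f (A.mulVec x + b)).comp (Lc A) :=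
  (hf.hasFDerivAt.comp x (hasFDerivAt_affine A b x)).fderiv

lemma clm_pi_decomp (L : (Fin n → ℝ) →L[ℝ] (Fin n → ℝ)) (v : Fin n → ℝ) (ρ : Fin n) :
    L v ρ = ∑ σ : Fin n, v σ * L (Pi.single σ 1) ρ := by
  have hv : v = ∑ σ : Fin n, v σ • (Pi.single σ (1:ℝ) : Fin n → ℝ) := by
    funext a
    simp [Finset.sum_apply, Pi.single_apply, mul_comm]
  conv_lhs => rw [hv]
  rw [map_sum]
  simp [Finset.sum_apply]

lemma clm_scalar_decomp (L : (Fin n → ℝ) →L[ℝ] ℝ) (v : Fin n → ℝ) :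
    L v = ∑ σ : Fin n, v σ * L (Pi.single σ 1) := by
  have hv : v = ∑ σ : Fin n, v σ • (Pi.single σ (1:ℝ) : Fin n → ℝ) := by
    funext a
    simp [Finset.sum_apply, Pi.single_apply, mul_comm]
  conv_lhs => rw [hv]
  rw [map_sum]
  simp

lemma diff_fderiv_apply {f : (Fin n → ℝ) → (Fin n → ℝ)} (hf : ContDiff ℝ (⊤:ℕ∞) f)
    (v : Fin n → ℝ) (c : Fin n) :
    Differentiable ℝ (fun z => fderiv ℝ f z v c) := by
  have hD : Differentiable ℝ (fderiv ℝ f) :=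
    (hf.fderiv_right (m := (⊤:ℕ∞)) (by simp)).differentiable (by simp)
  have h1 : Differentiable ℝ (fun z => fderiv ℝ f z v) :=
    hD.clm_apply (differentiable_const v)
  exact fun x => ((ContinuousLinearMap.proj (R := ℝ) (φ := fun _ : Fin n => ℝ) c).differentiable.comp h1) x

variable {f : (Fin n → ℝ) → (Fin n → ℝ)} (hf : ContDiff ℝ (⊤:ℕ∞) f)
  (A : Matrix (Fin n) (Fin n) ℝ) (b x : Fin n → ℝ)

include hf

lemma jac_left : jacobianM n (fun z => A.mulVec (f z) + b) x = A * jacobianM n f x := by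
  ext i jj
  rw [jacobianM, Matrix.of_apply, fderiv_leftcomp A b (hf.differentiable (by simp) x)]
  simp [jacobianM, Matrix.mul_apply, Matrix.mulVec, dotProduct, Lc_apply]

lemma jac_right : jacobianM n (fun z => f (A.mulVec z + b)) x
    = jacobianM n f (A.mulVec x + b) * A := by
  ext i jj
  rw [jacobianM, Matrix.of_apply,
    fderiv_rightcomp A b (hf.differentiable (by simp) _)]
  rw [ContinuousLinearMap.comp_apply, Lc_apply]
  rw [clm_pi_decomp (fderiv ℝ f (A.mulVec x + b)) (A.mulVec (Pi.single jj 1)) i]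
  simp [jacobianM, Matrix.mul_apply, Matrix.mulVec, dotProduct, Pi.single_apply, mul_comm]

lemma sp_left (ρ μ ν : Fin n) :
    secondPartial n (fun z => A.mulVec (f z) + b) ρ μ ν x
      = ∑ σ : Fin n, A ρ σ * secondPartial n f σ μ ν x := by
  have hinner : (fun z => fderiv ℝ (fun z' => A.mulVec (f z') + b) z (Pi.single ν 1) ρ)
      = fun z => ∑ σ : Fin n, A ρ σ * fderiv ℝ f z (Pi.single ν 1) σ := by
    funext z
    rw [fderiv_leftcomp A b (hf.differentiable (by simp) z)]
    simp [Lc_apply, Matrix.mulVec, dotProduct]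
  rw [secondPartial, hinner,
    fderiv_fun_sum (fun σ _ => ((diff_fderiv_apply hf (Pi.single ν 1) σ) x).const_mul (A ρ σ))]
  rw [ContinuousLinearMap.sum_apply]
  refine Finset.sum_congr rfl fun σ _ => ?_
  rw [fderiv_const_mul ((diff_fderiv_apply hf (Pi.single ν 1) σ) x) (A ρ σ)]
  rfl

lemma sp_right (ρ μ ν : Fin n) :
    secondPartial n (fun z => f (A.mulVec z + b)) ρ μ ν x
      = ∑ μ' : Fin n, ∑ ν' : Fin n,
          A μ' μ * A ν' ν * secondPartial n f ρ μ' ν' (A.mulVec x + b) := by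
  have hinner : (fun z => fderiv ℝ (fun z' => f (A.mulVec z' + b)) z (Pi.single ν 1) ρ)
      = fun z => ∑ ν' : Fin n, A ν' ν * fderiv ℝ f (A.mulVec z + b) (Pi.single ν' 1) ρ := by
    funext z
    rw [fderiv_rightcomp A b (hf.differentiable (by simp) _)]
    rw [ContinuousLinearMap.comp_apply, Lc_apply,
      clm_pi_decomp (fderiv ℝ f (A.mulVec z + b)) (A.mulVec (Pi.single ν 1)) ρ]
    refine Finset.sum_congr rfl fun ν' _ => ?_
    simp [Matrix.mulVec, dotProduct, Pi.single_apply]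
  have hdiff : ∀ ν' : Fin n, DifferentiableAt ℝ
      (fun z => fderiv ℝ f (A.mulVec z + b) (Pi.single ν' 1) ρ) x := by
    intro ν'
    exact ((diff_fderiv_apply hf (Pi.single ν' 1) ρ) _).comp x
      ((hasFDerivAt_affine A b x).differentiableAt)
  rw [secondPartial, hinner, fderiv_fun_sum (fun ν' _ => (hdiff ν').const_mul (A ν' ν))]
  rw [ContinuousLinearMap.sum_apply, Finset.sum_comm]
  refine Finset.sum_congr rfl fun ν' _ => ?_
  rw [fderiv_const_mul (hdiff ν') (A ν' ν)]
  have : fderiv ℝ (fun z => fderiv ℝ f (A.mulVec z + b) (Pi.single ν' 1) ρ) x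
      = (fderiv ℝ (fun w => fderiv ℝ f w (Pi.single ν' 1) ρ) (A.mulVec x + b)).comp (Lc A) :=
    fderiv_rightcomp A b ((diff_fderiv_apply hf (Pi.single ν' 1) ρ) _)
  rw [ContinuousLinearMap.smul_apply, this, ContinuousLinearMap.comp_apply, Lc_apply,
    clm_scalar_decomp]
  rw [smul_eq_mul, Finset.mul_sum]
  refine Finset.sum_congr rfl fun μ' _ => ?_
  simp [secondPartial, Matrix.mulVec, dotProduct, Pi.single_apply]
  ring
omit hf in
lemma sum_rot3 (g : Fin n → Fin n → Fin n → Fin n → ℝ) (ρ : Fin n) :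
    ∑ a : Fin n, ∑ b : Fin n, ∑ c : Fin n, g ρ a b c
      = ∑ c : Fin n, ∑ a : Fin n, ∑ b : Fin n, g ρ a b c := by
  have h : ∀ a : Fin n, (∑ b : Fin n, ∑ c : Fin n, g ρ a b c)
      = ∑ c : Fin n, ∑ b : Fin n, g ρ a b c := fun a => Finset.sum_comm
  simp_rw [h]
  exact Finset.sum_comm

omit hf in
lemma sum_swap4 (g : Fin n → Fin n → Fin n → Fin n → ℝ) :
    ∑ a : Fin n, ∑ b : Fin n, ∑ c : Fin n, ∑ d : Fin n, g a b c d
      = ∑ c : Fin n, ∑ d : Fin n, ∑ a : Fin n, ∑ b : Fin n, g a b c d := by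
  have h1 : ∀ a : Fin n, (∑ b : Fin n, ∑ c : Fin n, ∑ d : Fin n, g a b c d)
      = ∑ c : Fin n, ∑ d : Fin n, ∑ b : Fin n, g a b c d := by
    intro a
    rw [Finset.sum_comm]
    exact Finset.sum_congr rfl fun c _ => Finset.sum_comm
  simp_rw [h1]
  rw [Finset.sum_comm]
  exact Finset.sum_congr rfl fun c _ => Finset.sum_comm

def Qv (f : (Fin n → ℝ) → (Fin n → ℝ)) (j k : Fin n) (x : Fin n → ℝ)
    (y : Fin n → Fin n → ℝ) : Fin n → ℝ :=
  fun ρ => ∑ μ : Fin n, ∑ ν : Fin n, secondPartial n f ρ μ ν x * y ν j * y μ k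

omit hf in
lemma gammaFn_eq (f : (Fin n → ℝ) → (Fin n → ℝ)) (i j k : Fin n) (x : Fin n → ℝ)
    (y : Fin n → Fin n → ℝ) :
    gammaFn n f i j k x y
      = ((Matrix.of y)⁻¹ * (jacobianM n f x)⁻¹).mulVec (Qv f j k x y) i := by
  have h : ((Matrix.of y)⁻¹ * (jacobianM n f x)⁻¹).mulVec (Qv f j k x y) i
      = ∑ ρ : Fin n, ∑ lam : Fin n, ∑ μ : Fin n, ∑ ν : Fin n,
          (Matrix.of y)⁻¹ i lam * (jacobianM n f x)⁻¹ lam ρ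
            * secondPartial n f ρ μ ν x * y ν j * y μ k := by
    simp only [Matrix.mulVec, dotProduct, Matrix.mul_apply, Qv,
      Finset.sum_mul, Finset.mul_sum]
    refine Finset.sum_congr rfl fun ρ _ => ?_
    rw [sum_rot3 (fun ρ a b c => (Matrix.of y)⁻¹ i c * (jacobianM n f x)⁻¹ c ρ
        * (secondPartial n f ρ a b x * y b j * y a k)) ρ]
    exact Finset.sum_congr rfl fun c _ => Finset.sum_congr rfl fun a _ =>
      Finset.sum_congr rfl fun b _ => by ring
  rw [gammaFn, h, Finset.sum_comm]


lemma gamma_left (hA : IsUnit A) (i j k : Fin n) (y : Fin n → Fin n → ℝ) :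
    gammaFn n (fun z => A.mulVec (f z) + b) i j k x y = gammaFn n f i j k x y := by
  have hAdet := (Matrix.isUnit_iff_isUnit_det A).mp hA
  rw [gammaFn_eq, gammaFn_eq, jac_left hf]
  have hQ : Qv (fun z => A.mulVec (f z) + b) j k x y = A.mulVec (Qv f j k x y) := by
    funext ρ
    simp only [Qv, Matrix.mulVec, dotProduct, sp_left hf A b x,
      Finset.sum_mul, Finset.mul_sum]
    rw [sum_rot3 (fun ρ a b' c => A ρ c * secondPartial n f c a b' x * y b' j * y a k) ρ]
    exact Finset.sum_congr rfl fun c _ => Finset.sum_congr rfl fun a _ =>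
      Finset.sum_congr rfl fun b' _ => by ring
  rw [hQ, Matrix.mulVec_mulVec, Matrix.mul_inv_rev]
  congr 1
  rw [Matrix.mul_assoc, Matrix.mul_assoc, Matrix.nonsing_inv_mul A hAdet, Matrix.mul_one]

lemma gamma_right (i j k : Fin n) (y : Fin n → Fin n → ℝ) :
    gammaFn n (fun z => f (A.mulVec z + b)) i j k x y
      = gammaFn n f i j k (A.mulVec x + b) (fun a c => ∑ d : Fin n, A a d * y d c) := by
  set y' : Fin n → Fin n → ℝ := fun a c => ∑ d : Fin n, A a d * y d c with hy'def
  have hy' : (Matrix.of y' : Matrix (Fin n) (Fin n) ℝ) = A * Matrix.of y := by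
    ext a c; simp [Matrix.mul_apply, hy'def]
  rw [gammaFn_eq, gammaFn_eq, jac_right hf]
  have hQ : Qv (fun z => f (A.mulVec z + b)) j k x y
      = Qv f j k (A.mulVec x + b) y' := by
    funext ρ
    simp only [Qv, sp_right hf A b x, Finset.sum_mul, Finset.mul_sum, hy'def]
    rw [sum_swap4 (fun p q r t => A r p * A t q
      * secondPartial n f ρ r t (A.mulVec x + b) * y q j * y p k)]
    exact Finset.sum_congr rfl fun r _ => Finset.sum_congr rfl fun t _ =>
      Finset.sum_congr rfl fun p _ => Finset.sum_congr rfl fun q _ => by ring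
  rw [hQ, Matrix.mul_inv_rev, hy', Matrix.mul_inv_rev]
  congr 1
  rw [Matrix.mul_assoc]


omit hf in
lemma fderiv_affine_apply (hA : IsUnit A) (u : (Fin n → ℝ) → ℝ) (v : Fin n → ℝ) :
    fderiv ℝ (fun z => u (A.mulVec z + b)) x v
      = fderiv ℝ u (A.mulVec x + b) (A.mulVec v) := by
  have hAdet := (Matrix.isUnit_iff_isUnit_det A).mp hA
  by_cases hu : DifferentiableAt ℝ u (A.mulVec x + b)
  · rw [fderiv_rightcomp A b hu]; rfl
  · have hinv : ∀ w : Fin n → ℝ, A.mulVec (A⁻¹.mulVec (w - b)) + b = w := by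
      intro w
      rw [Matrix.mulVec_mulVec, Matrix.mul_nonsing_inv A hAdet, Matrix.one_mulVec,
        sub_add_cancel]
    have hin : ∀ p : Fin n → ℝ, HasFDerivAt (fun w => A⁻¹.mulVec (w - b)) (Lc A⁻¹) p := by
      intro p
      have h0 := hasFDerivAt_affine A⁻¹ (-(A⁻¹.mulVec b)) p
      have : (fun w => A⁻¹.mulVec w + -(A⁻¹.mulVec b)) = fun w => A⁻¹.mulVec (w - b) := by
        funext w; rw [Matrix.mulVec_sub, sub_eq_add_neg]
      rwa [this] at h0
    have hnc : ¬ DifferentiableAt ℝ (fun z => u (A.mulVec z + b)) x := by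
      intro hc
      apply hu
      have hpt : A⁻¹.mulVec ((A.mulVec x + b) - b) = x := by
        rw [add_sub_cancel_right, Matrix.mulVec_mulVec, Matrix.nonsing_inv_mul A hAdet,
          Matrix.one_mulVec]
      have hcomp : DifferentiableAt ℝ
          (fun w => u (A.mulVec (A⁻¹.mulVec (w - b)) + b)) (A.mulVec x + b) := by
        have h2 : DifferentiableAt ℝ (fun z => u (A.mulVec z + b))
            (A⁻¹.mulVec ((A.mulVec x + b) - b)) := by rw [hpt]; exact hc
        exact DifferentiableAt.comp (𝕜 := ℝ) (g := fun z => u (A.mulVec z + b))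
          (f := fun w => A⁻¹.mulVec (w - b)) _ h2 (hin _).differentiableAt
      have : (fun w => u (A.mulVec (A⁻¹.mulVec (w - b)) + b)) = u := by
        funext w; rw [hinv]
      rwa [this] at hcomp
    rw [fderiv_zero_of_not_differentiableAt hu, fderiv_zero_of_not_differentiableAt hnc]
    simp

lemma iter_left (hA : IsUnit A) (i j k : Fin n) (ℓs : List (Fin n)) :
    gammaIter n (fun z => A.mulVec (f z) + b) i j k ℓs = gammaIter n f i j k ℓs := by
  induction ℓs with
  | nil =>
    funext x' y'
    exact gamma_left hf A b x' hA i j k y'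
  | cons ℓ rest ih => simp only [gammaIter, ih]

lemma iter_right (hA : IsUnit A) (i j k : Fin n) (ℓs : List (Fin n)) :
    ∀ (x' : Fin n → ℝ) (y' : Fin n → Fin n → ℝ),
      gammaIter n (fun z => f (A.mulVec z + b)) i j k ℓs x' y'
        = gammaIter n f i j k ℓs (A.mulVec x' + b)
            (fun a c => ∑ d : Fin n, A a d * y' d c) := by
  induction ℓs with
  | nil => exact fun x' y' => gamma_right hf A b x' i j k y'
  | cons ℓ rest ih =>
    intro x' y'
    have hrw : gammaIter n (fun z => f (A.mulVec z + b)) i j k rest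
        = fun x'' y'' => gammaIter n f i j k rest (A.mulVec x'' + b)
            (fun a c => ∑ d : Fin n, A a d * y'' d c) :=
      funext fun x'' => funext fun y'' => ih x'' y''
    show Xop n ℓ (gammaIter n (fun z => f (A.mulVec z + b)) i j k rest) x' y' = _
    rw [Xop, hrw]
    show (∑ μ : Fin n, y' μ ℓ * fderiv ℝ
        (fun x'' => gammaIter n f i j k rest (A.mulVec x'' + b)
          (fun a c => ∑ d : Fin n, A a d * y' d c)) x' (Pi.single μ 1)) = _
    have key : ∀ μ : Fin n, fderiv ℝ
        (fun x'' => gammaIter n f i j k rest (A.mulVec x'' + b)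
          (fun a c => ∑ d : Fin n, A a d * y' d c)) x' (Pi.single μ 1)
        = ∑ σ : Fin n, A σ μ * fderiv ℝ
            (fun x'' => gammaIter n f i j k rest x''
              (fun a c => ∑ d : Fin n, A a d * y' d c)) (A.mulVec x' + b)
            (Pi.single σ 1) := by
      intro μ
      have h1 := fderiv_affine_apply A b x' hA
        (fun w => gammaIter n f i j k rest w (fun a c => ∑ d : Fin n, A a d * y' d c))
        (Pi.single μ 1)
      refine h1.trans ?_
      rw [clm_scalar_decomp]
      refine Finset.sum_congr rfl fun σ _ => ?_
      simp [Matrix.mulVec, dotProduct, Pi.single_apply]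
    simp only [key, Finset.mul_sum]
    rw [Finset.sum_comm]
    show _ = Xop n ℓ (gammaIter n f i j k rest) (A.mulVec x' + b)
        (fun a c => ∑ d : Fin n, A a d * y' d c)
    rw [Xop]
    refine Finset.sum_congr rfl fun σ _ => ?_
    rw [Finset.sum_mul]
    exact Finset.sum_congr rfl fun μ _ => by ring

end S11

/-- The higher cocycles are invariant under left composition with affine maps, and
transform under right composition with an affine map by the prolonged action:
`γ_{…}(φ_aff ∘ φ) = γ_{…}(φ)` and `γ_{…}(φ ∘ φ_aff) = γ_{…}(φ) ∘ φ̃_aff`. -/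
theorem stmt11 (n : ℕ) (A : Matrix (Fin n) (Fin n) ℝ) (hA : IsUnit A)
    (b : Fin n → ℝ) (φ : Diffeo n) (i j k : Fin n) (ℓs : List (Fin n))
    (x : Fin n → ℝ) (y : Fin n → Fin n → ℝ) (hy : IsUnit (Matrix.of y)) :
    gammaIter n ((fun z => A.mulVec z + b) ∘ φ.toFun) i j k ℓs x y
        = gammaIter n φ.toFun i j k ℓs x y ∧
    gammaIter n (φ.toFun ∘ (fun z => A.mulVec z + b)) i j k ℓs x y
        = gammaIter n φ.toFun i j k ℓs (A.mulVec x + b)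
            (fun a c => ∑ d : Fin n, A a d * y d c) := by
  have hf := φ.smooth_toFun
  have e1 : ((fun z => A.mulVec z + b) ∘ φ.toFun)
      = fun z => A.mulVec (φ.toFun z) + b := rfl
  have e2 : (φ.toFun ∘ (fun z => A.mulVec z + b))
      = fun z => φ.toFun (A.mulVec z + b) := rfl
  constructor
  · rw [e1, S11.iter_left hf A b hA i j k ℓs]
  · rw [e2]
    exact S11.iter_right hf A b hA i j k ℓs x y
end
end

section
/- Let φ be a diffeomorphism of ℝ^{2n+1} (bijective C^∞ with C^∞ inverse) which is an orientation preserving contact transformation: there is a function f : ℝ^{2n+1} → ℝ with f(x) > 0 for all x such that α_{φ(x)}(Dφ(x)v) = f(x)·α_x(v) for all x and all tangent vectors v. Then there exist unique a ∈ ℝ^{2n+1}, A ∈ Sp(n,ℝ) and t > 0 such that ψ := (L_a ∘ S_A ∘ μ_t)⁻¹ ∘ φ satisfies: ψ(0) = 0; Dψ(0)v = v for every v with v⁰ = 0; and the 0-th component of Dψ(0)e₀ equals 1 (i.e. the H-tangent map of ψ at 0 is the identity). -/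
noncomputable section

/-- Points of `ℝ^{2n+1}`, written `x = (x⁰, x¹, …, x^{2n})`. -/
abbrev HPt (n : ℕ) := Fin (2*n+1) → ℝ

/-- `β(x',y') = (1/2)·Σ_{i=1}^n (x^i y^{n+i} − x^{n+i} y^i)` for `x', y' ∈ ℝ^{2n}`. -/
def beta2 (n : ℕ) (x y : Fin (2*n) → ℝ) : ℝ :=
  (1/2) * ∑ i : Fin n,
    (x ⟨i.1, by have := i.isLt; omega⟩ * y ⟨n + i.1, by have := i.isLt; omega⟩
      - x ⟨n + i.1, by have := i.isLt; omega⟩ * y ⟨i.1, by have := i.isLt; omega⟩)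

/-- The Heisenberg group law `x ∗ y = (x⁰ + y⁰ + β(x',y'), x' + y')` on `ℝ^{2n+1}`. -/
def hmul (n : ℕ) (x y : HPt n) : HPt n :=
  Fin.cons (x 0 + y 0 + beta2 n (Fin.tail x) (Fin.tail y))
    (fun i => Fin.tail x i + Fin.tail y i)

/-- The contact form: `α_x(v) = −v⁰ + (1/2)·Σ_{i=1}^n (x^i v^{n+i} − x^{n+i} v^i)`. -/
def alphaForm (n : ℕ) (x v : HPt n) : ℝ :=
  -(v 0) + beta2 n (Fin.tail x) (Fin.tail v)

/-- The canonical frame `E_0 = ∂₀`, `E_i = ∂_i − (1/2)x^{n+i}∂₀`,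
`E_{n+i} = ∂_{n+i} + (1/2)x^i∂₀` (uniformly: `E_μ|ₓ = e_μ + β(x', e_μ')·e₀`). -/
def Efield (n : ℕ) (μ : Fin (2*n+1)) (x : HPt n) : HPt n :=
  (Pi.single μ 1 : HPt n)
    + beta2 n (Fin.tail x) (Fin.tail (Pi.single μ 1 : HPt n)) • (Pi.single 0 1 : HPt n)

/-- The transformation `S_A(x) = (x⁰, A·x')` for a `2n×2n` matrix `A`. -/
def SAmap (n : ℕ) (A : Matrix (Fin (2*n)) (Fin (2*n)) ℝ) (x : HPt n) : HPt n :=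
  Fin.cons (x 0) (A.mulVec (Fin.tail x))

/-- The contact homothety `μ_t(x) = (t²x⁰, t·x')`. -/
def muT (n : ℕ) (t : ℝ) (x : HPt n) : HPt n :=
  Fin.cons (t ^ 2 * x 0) (fun i => t * Fin.tail x i)

/-- The standard symplectic matrix `J = [[0, Iₙ], [−Iₙ, 0]]` on `ℝ^{2n}`. -/
def Jmat (n : ℕ) : Matrix (Fin (2*n)) (Fin (2*n)) ℝ :=
  Matrix.of fun i j =>
    if i.1 < n ∧ j.1 = i.1 + n then (1 : ℝ)
    else if j.1 < n ∧ i.1 = j.1 + n then -1 else 0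

/-- `A ∈ Sp(n,ℝ)`: the symplectic condition `Aᵀ·J·A = J`. -/
def IsSymplectic (n : ℕ) (A : Matrix (Fin (2*n)) (Fin (2*n)) ℝ) : Prop :=
  A.transpose * Jmat n * A = Jmat n

section Helpers
variable {n : ℕ}


lemma beta2_zero_right (u : Fin (2*n) → ℝ) : beta2 n u 0 = 0 := by
  simp [beta2]

lemma beta2_zero_left (u : Fin (2*n) → ℝ) : beta2 n 0 u = 0 := by
  simp [beta2]

lemma beta2_antisymm (u w : Fin (2*n) → ℝ) : beta2 n u w = - beta2 n w u := by
  unfold beta2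
  rw [neg_mul_eq_mul_neg, ← Finset.sum_neg_distrib]
  congr 1
  exact Finset.sum_congr rfl fun i _ => by ring

lemma beta2_add_right (u v w : Fin (2*n) → ℝ) :
    beta2 n u (v + w) = beta2 n u v + beta2 n u w := by
  unfold beta2
  rw [← mul_add, ← Finset.sum_add_distrib]
  congr 1
  exact Finset.sum_congr rfl fun i _ => by simp only [Pi.add_apply]; ring

lemma beta2_sub_right (u v w : Fin (2*n) → ℝ) :
    beta2 n u (v - w) = beta2 n u v - beta2 n u w := by
  unfold beta2
  rw [← mul_sub, ← Finset.sum_sub_distrib]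
  congr 1
  exact Finset.sum_congr rfl fun i _ => by simp only [Pi.sub_apply]; ring

lemma beta2_smul_right (u w : Fin (2*n) → ℝ) (r : ℝ) :
    beta2 n u (r • w) = r * beta2 n u w := by
  unfold beta2
  conv_rhs => rw [mul_left_comm, Finset.mul_sum]
  congr 1
  exact Finset.sum_congr rfl fun i _ => by simp only [Pi.smul_apply, smul_eq_mul]; ring

lemma beta2_smul_left (u w : Fin (2*n) → ℝ) (r : ℝ) :
    beta2 n (r • u) w = r * beta2 n u w := by
  unfold beta2
  conv_rhs => rw [mul_left_comm, Finset.mul_sum]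
  congr 1
  exact Finset.sum_congr rfl fun i _ => by simp only [Pi.smul_apply, smul_eq_mul]; ring

lemma beta2_add_left (u v w : Fin (2*n) → ℝ) :
    beta2 n (u + v) w = beta2 n u w + beta2 n v w := by
  unfold beta2
  rw [← mul_add, ← Finset.sum_add_distrib]
  congr 1
  exact Finset.sum_congr rfl fun i _ => by simp only [Pi.add_apply]; ring



lemma Jmat_mulVec (w : Fin (2*n) → ℝ) (k : Fin (2*n)) :
    (Jmat n).mulVec w k =
      if h : k.1 < n then w ⟨n + k.1, by omega⟩
      else - w ⟨k.1 - n, by have := k.isLt; omega⟩ := by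
  unfold Matrix.mulVec dotProduct
  split
  · next h =>
    rw [Finset.sum_eq_single (⟨k.1 + n, by omega⟩ : Fin (2*n))]
    · have : (⟨k.1 + n, by omega⟩ : Fin (2*n)) = ⟨n + k.1, by omega⟩ := by
        ext; simp [Nat.add_comm]
      rw [this]
      simp only [Jmat, Matrix.of_apply]
      rw [if_pos ⟨h, by simp [Nat.add_comm]⟩, one_mul]
    · intro l _ hl
      have hl' : l.1 ≠ k.1 + n := fun hc => hl (by ext; exact hc)
      simp only [Jmat, Matrix.of_apply]
      rw [if_neg (by omega), if_neg (by omega), zero_mul]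
    · intro hc; exact absurd (Finset.mem_univ _) hc
  · next h =>
    rw [Finset.sum_eq_single (⟨k.1 - n, by have := k.isLt; omega⟩ : Fin (2*n))]
    · simp only [Jmat, Matrix.of_apply]
      have := k.isLt
      rw [if_neg (by omega), if_pos ⟨by omega, by omega⟩]
      ring
    · intro l _ hl
      have hl' : l.1 ≠ k.1 - n := fun hc => hl (by ext; exact hc)
      have := k.isLt
      simp only [Jmat, Matrix.of_apply]
      rw [if_neg (by omega), if_neg (by omega), zero_mul]
    · intro hc; exact absurd (Finset.mem_univ _) hc


lemma dot_J (u w : Fin (2*n) → ℝ) :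
    dotProduct u ((Jmat n).mulVec w) = 2 * beta2 n u w := by
  unfold dotProduct
  rw [← Fintype.sum_equiv (finSumFinEquiv.trans (finCongr (two_mul n).symm))
    (fun p => u ((finSumFinEquiv.trans (finCongr (two_mul n).symm)) p)
      * (Jmat n).mulVec w ((finSumFinEquiv.trans (finCongr (two_mul n).symm)) p))
    (fun k => u k * (Jmat n).mulVec w k) (fun p => rfl)]
  rw [Fintype.sum_sum_type]
  have hl : ∀ i : Fin n, ((finSumFinEquiv.trans (finCongr (two_mul n).symm)) (Sum.inl i))
      = (⟨i.1, by have := i.isLt; omega⟩ : Fin (2*n)) := by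
    intro i; ext; simp
  have hr : ∀ i : Fin n, ((finSumFinEquiv.trans (finCongr (two_mul n).symm)) (Sum.inr i))
      = (⟨n + i.1, by have := i.isLt; omega⟩ : Fin (2*n)) := by
    intro i; ext; simp [Nat.add_comm]
  simp only [hl, hr]
  have h1 : ∀ i : Fin n,
      u (⟨i.1, by have := i.isLt; omega⟩ : Fin (2*n))
        * (Jmat n).mulVec w ⟨i.1, by have := i.isLt; omega⟩
      = u ⟨i.1, by have := i.isLt; omega⟩ * w ⟨n + i.1, by have := i.isLt; omega⟩ := by
    intro i
    rw [Jmat_mulVec, dif_pos (show (i.1 : ℕ) < n from i.isLt)]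
  have h2 : ∀ i : Fin n,
      u (⟨n + i.1, by have := i.isLt; omega⟩ : Fin (2*n))
        * (Jmat n).mulVec w ⟨n + i.1, by have := i.isLt; omega⟩
      = -(u ⟨n + i.1, by have := i.isLt; omega⟩ * w ⟨i.1, by have := i.isLt; omega⟩) := by
    intro i
    rw [Jmat_mulVec, dif_neg (show ¬ (n + i.1 < n) by omega)]
    have hidx : (⟨n + i.1 - n, by have := i.isLt; omega⟩ : Fin (2*n))
        = ⟨i.1, by have := i.isLt; omega⟩ := Fin.ext (show n + i.1 - n = i.1 by omega)
    rw [hidx]; ring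
  rw [Finset.sum_congr rfl (fun i _ => h1 i), Finset.sum_congr rfl (fun i _ => h2 i)]
  unfold beta2
  rw [← mul_assoc]
  norm_num
  rw [← sub_eq_add_neg, ← Finset.sum_sub_distrib]

lemma J_mul_J : Jmat n * Jmat n = -1 := by
  ext i j
  rw [Matrix.mul_apply]
  by_cases h : i.1 < n
  · rw [Finset.sum_eq_single (⟨i.1 + n, by omega⟩ : Fin (2*n))]
    · show (Jmat n i ⟨i.1 + n, _⟩) * (Jmat n ⟨i.1 + n, _⟩ j) = _
      unfold Jmat
      rw [Matrix.of_apply, Matrix.of_apply,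
        if_pos (show i.1 < n ∧ i.1 + n = i.1 + n from ⟨h, rfl⟩), one_mul,
        if_neg (show ¬ (i.1 + n < n ∧ (j.1 : ℕ) = i.1 + n + n) by omega)]
      by_cases hij : j = i
      · subst hij
        rw [if_pos (show (j.1 : ℕ) < n ∧ (j.1 : ℕ) + n = (j.1:ℕ) + n from ⟨h, rfl⟩)]
        simp [Matrix.one_apply]
      · rw [if_neg (show ¬ ((j.1:ℕ) < n ∧ (i.1:ℕ) + n = (j.1:ℕ) + n) by
          simp only [Fin.ext_iff] at hij; omega)]
        simp [Matrix.one_apply, Matrix.neg_apply, Ne.symm hij]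
    · intro l _ hl
      have hl' : l.1 ≠ i.1 + n := fun hc => hl (Fin.ext hc)
      show (Jmat n i l) * (Jmat n l j) = 0
      unfold Jmat
      rw [Matrix.of_apply, if_neg (by omega), if_neg (by omega), zero_mul]
    · intro hc; exact absurd (Finset.mem_univ _) hc
  · have hi := i.isLt
    rw [Finset.sum_eq_single (⟨i.1 - n, by omega⟩ : Fin (2*n))]
    · show (Jmat n i ⟨i.1 - n, _⟩) * (Jmat n ⟨i.1 - n, _⟩ j) = _
      unfold Jmat
      rw [Matrix.of_apply, Matrix.of_apply,
        if_neg (show ¬ ((i.1:ℕ) < n ∧ i.1 - n = i.1 + n) by omega),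
        if_pos (show i.1 - n < n ∧ (i.1:ℕ) = i.1 - n + n from ⟨by omega, by omega⟩)]
      by_cases hij : j = i
      · subst hij
        rw [if_pos (show (j.1:ℕ) - n < n ∧ (j.1:ℕ) = j.1 - n + n from ⟨by omega, by omega⟩)]
        simp [Matrix.one_apply]
      · rw [if_neg (show ¬ ((i.1:ℕ) - n < n ∧ (j.1:ℕ) = i.1 - n + n) by
          simp only [Fin.ext_iff] at hij; omega),
          if_neg (show ¬ ((j.1:ℕ) < n ∧ (i.1:ℕ) - n = j.1 + n) by omega)]
        simp [Matrix.one_apply, Matrix.neg_apply, Ne.symm hij]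
    · intro l _ hl
      have hl' : l.1 ≠ i.1 - n := fun hc => hl (Fin.ext hc)
      show (Jmat n i l) * (Jmat n l j) = 0
      unfold Jmat
      rw [Matrix.of_apply, if_neg (by omega), if_neg (by omega), zero_mul]
    · intro hc; exact absurd (Finset.mem_univ _) hc

lemma isUnit_J_det : IsUnit (Jmat n).det := by
  apply IsUnit.of_mul_eq_one (Jmat n).det
  rw [← Matrix.det_mul, J_mul_J, Matrix.det_neg, Matrix.det_one, Fintype.card_fin,
    pow_mul]
  norm_num

lemma symp_isUnit {A : Matrix (Fin (2*n)) (Fin (2*n)) ℝ} (hA : IsSymplectic n A) :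
    IsUnit A.det := by
  have h := congrArg Matrix.det hA
  rw [Matrix.det_mul, Matrix.det_mul, Matrix.det_transpose] at h
  have hJ : (Jmat n).det ≠ 0 := isUnit_J_det.ne_zero
  have h2 : (A.det * A.det) * (Jmat n).det = 1 * (Jmat n).det := by linear_combination h
  exact IsUnit.of_mul_eq_one _ (mul_right_cancel₀ hJ h2)

lemma conj_J_apply (B : Matrix (Fin (2*n)) (Fin (2*n)) ℝ) (i j : Fin (2*n)) :
    (B.transpose * Jmat n * B) i j
      = dotProduct (fun k => B k i) ((Jmat n).mulVec (fun k => B k j)) := by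
  simp only [Matrix.mul_apply, Matrix.transpose_apply, Finset.sum_mul,
    Matrix.mulVec, dotProduct, Finset.mul_sum]
  rw [Finset.sum_comm]
  apply Finset.sum_congr rfl
  intro k _
  apply Finset.sum_congr rfl
  intro l _
  ring

lemma dotJ_single (i j : Fin (2*n)) :
    2 * beta2 n (Pi.single i 1) (Pi.single j 1) = Jmat n i j := by
  rw [← dot_J, single_dotProduct, Matrix.mulVec_single]
  simp

lemma symp_of_beta {f0 t : ℝ} (Q : Matrix (Fin (2*n)) (Fin (2*n)) ℝ)
    (ht : t^2 = f0) (ht0 : t ≠ 0)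
    (hkey : ∀ v w, beta2 n (Q.mulVec v) (Q.mulVec w) = f0 * beta2 n v w) :
    IsSymplectic n (t⁻¹ • Q) := by
  ext i j
  rw [conj_J_apply, dot_J]
  have hci : (fun k => (t⁻¹ • Q) k i) = t⁻¹ • (Q.mulVec (Pi.single i 1)) := by
    funext k
    simp [Matrix.mulVec_single]
  have hcj : (fun k => (t⁻¹ • Q) k j) = t⁻¹ • (Q.mulVec (Pi.single j 1)) := by
    funext k
    simp [Matrix.mulVec_single]
  rw [hci, hcj, beta2_smul_left, beta2_smul_right, hkey, ← dotJ_single i j]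
  have : t⁻¹ * (t⁻¹ * (f0 * beta2 n (Pi.single i 1) (Pi.single j 1)))
      = (t⁻¹ * t⁻¹ * f0) * beta2 n (Pi.single i 1) (Pi.single j 1) := by ring
  rw [this]
  have h1 : t⁻¹ * t⁻¹ * f0 = 1 := by
    field_simp
    linarith [ht]
  rw [h1]
  ring

lemma tail_add (x y : HPt n) : Fin.tail (x + y) = Fin.tail x + Fin.tail y := rfl
lemma tail_sub (x y : HPt n) : Fin.tail (x - y) = Fin.tail x - Fin.tail y := rfl
lemma tail_smul (c : ℝ) (x : HPt n) : Fin.tail (c • x) = c • Fin.tail x := rfl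

def Lfun (n : ℕ) (a' : Fin (2*n) → ℝ) (B : Matrix (Fin (2*n)) (Fin (2*n)) ℝ) (t : ℝ) :
    HPt n →ₗ[ℝ] HPt n where
  toFun y := Fin.cons ((t^2)⁻¹ * (y 0 - beta2 n a' (Fin.tail y)))
    (fun i => t⁻¹ * B.mulVec (Fin.tail y) i)
  map_add' x y := by
    funext i
    refine Fin.cases ?_ ?_ i
    · simp only [Fin.cons_zero, tail_add, beta2_add_right, Pi.add_apply]
      ring
    · intro j
      simp only [Fin.cons_succ, tail_add, Pi.add_apply, Matrix.mulVec_add]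
      ring
  map_smul' c x := by
    funext i
    refine Fin.cases ?_ ?_ i
    · simp only [Fin.cons_zero, tail_smul, beta2_smul_right, Pi.smul_apply,
        RingHom.id_apply, smul_eq_mul]
      ring
    · intro j
      simp only [Fin.cons_succ, tail_smul, Pi.smul_apply, Matrix.mulVec_smul,
        RingHom.id_apply, smul_eq_mul]
      ring

lemma Lfun_zero (a' : Fin (2*n) → ℝ) (B : Matrix (Fin (2*n)) (Fin (2*n)) ℝ) (t : ℝ)
    (y : HPt n) :
    Lfun n a' B t y 0 = (t^2)⁻¹ * (y 0 - beta2 n a' (Fin.tail y)) := rfl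

lemma Lfun_succ (a' : Fin (2*n) → ℝ) (B : Matrix (Fin (2*n)) (Fin (2*n)) ℝ) (t : ℝ)
    (y : HPt n) (i : Fin (2*n)) :
    Lfun n a' B t y i.succ = t⁻¹ * B.mulVec (Fin.tail y) i := by
  simp only [Lfun, LinearMap.coe_mk, AddHom.coe_mk, Fin.cons_succ]

lemma Gmap_zero (a : HPt n) (A : Matrix (Fin (2*n)) (Fin (2*n)) ℝ) (t : ℝ) (z : HPt n) :
    hmul n a (SAmap n A (muT n t z)) 0
      = a 0 + t^2 * z 0 + beta2 n (Fin.tail a) (A.mulVec (t • Fin.tail z)) := by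
  unfold hmul SAmap muT
  simp only [Fin.cons_zero, Fin.tail_cons]
  congr 2

lemma Gmap_tail (a : HPt n) (A : Matrix (Fin (2*n)) (Fin (2*n)) ℝ) (t : ℝ) (z : HPt n) :
    Fin.tail (hmul n a (SAmap n A (muT n t z)))
      = Fin.tail a + A.mulVec (t • Fin.tail z) := by
  unfold hmul SAmap muT
  funext i
  simp only [Fin.tail_cons, Pi.add_apply]
  congr 2

lemma solve_fwd (a : HPt n) (A : Matrix (Fin (2*n)) (Fin (2*n)) ℝ) (t : ℝ)
    (hdet : IsUnit A.det) (ht : t ≠ 0) (y : HPt n) :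
    hmul n a (SAmap n A (muT n t (Lfun n (Fin.tail a) A⁻¹ t (y - a)))) = y := by
  set z := Lfun n (Fin.tail a) A⁻¹ t (y - a) with hz
  have htz : A.mulVec (t • Fin.tail z) = Fin.tail y - Fin.tail a := by
    have h1 : t • Fin.tail z = A⁻¹.mulVec (Fin.tail (y - a)) := by
      funext i
      have := Lfun_succ (Fin.tail a) A⁻¹ t (y - a) i
      simp only [Pi.smul_apply, smul_eq_mul, hz, Fin.tail]
      rw [this]
      field_simp
    rw [h1, Matrix.mulVec_mulVec, Matrix.mul_nonsing_inv A hdet, Matrix.one_mulVec,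
      tail_sub]
  funext i
  refine Fin.cases ?_ ?_ i
  · rw [Gmap_zero, htz]
    have h0 : z 0 = (t^2)⁻¹ * ((y - a) 0 - beta2 n (Fin.tail a) (Fin.tail (y - a))) :=
      Lfun_zero _ _ _ _
    rw [h0, tail_sub, beta2_sub_right]
    have ht2 : (t^2 : ℝ) ≠ 0 := pow_ne_zero 2 ht
    simp only [Pi.sub_apply]
    field_simp
    ring
  · intro j
    have h1 := congrFun (Gmap_tail a A t z) j
    have h2 := congrFun htz j
    simp only [Fin.tail, Pi.add_apply, Pi.sub_apply] at h1 h2 ⊢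
    rw [h1, h2]
    ring

lemma solve_bwd (a : HPt n) (A : Matrix (Fin (2*n)) (Fin (2*n)) ℝ) (t : ℝ)
    (hdet : IsUnit A.det) (ht : t ≠ 0) (z : HPt n) :
    Lfun n (Fin.tail a) A⁻¹ t (hmul n a (SAmap n A (muT n t z)) - a) = z := by
  set y := hmul n a (SAmap n A (muT n t z)) with hy
  have hty : Fin.tail y - Fin.tail a = A.mulVec (t • Fin.tail z) := by
    rw [hy, Gmap_tail]; funext i; simp
  funext i
  refine Fin.cases ?_ ?_ i
  · rw [Lfun_zero, tail_sub, hty]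
    have h0 : y 0 = a 0 + t^2 * z 0 + beta2 n (Fin.tail a) (A.mulVec (t • Fin.tail z)) :=
      Gmap_zero _ _ _ _
    simp only [Pi.sub_apply]
    rw [h0]
    have ht2 : (t^2 : ℝ) ≠ 0 := pow_ne_zero 2 ht
    field_simp
    ring
  · intro j
    rw [Lfun_succ, tail_sub, hty, Matrix.mulVec_smul, Matrix.mulVec_smul,
      Matrix.mulVec_mulVec, Matrix.nonsing_inv_mul A hdet, Matrix.one_mulVec]
    simp only [Pi.smul_apply, smul_eq_mul]
    rw [show Fin.tail z j = z j.succ from rfl]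
    field_simp

lemma tail_single0 : Fin.tail (Pi.single 0 1 : HPt n) = 0 := by
  funext i
  show (Pi.single (0 : Fin (2*n+1)) (1:ℝ)) i.succ = 0
  exact Pi.single_eq_of_ne (Fin.succ_ne_zero i) 1

lemma hasDerivAt_beta2_tail {F G : ℝ → HPt n} {F' G' : HPt n} {s : ℝ}
    (hF : HasDerivAt F F' s) (hG : HasDerivAt G G' s) :
    HasDerivAt (fun u => beta2 n (Fin.tail (F u)) (Fin.tail (G u)))
      (beta2 n (Fin.tail F') (Fin.tail (G s)) + beta2 n (Fin.tail (F s)) (Fin.tail G'))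
      s := by
  have hc : ∀ j : Fin (2*n+1), HasDerivAt (fun u => F u j) (F' j) s :=
    fun j => hasDerivAt_pi.1 hF j
  have hd : ∀ j : Fin (2*n+1), HasDerivAt (fun u => G u j) (G' j) s :=
    fun j => hasDerivAt_pi.1 hG j
  have hsum : HasDerivAt (fun u => ∑ i : Fin n,
      (F u (Fin.succ ⟨i.1, by have := i.isLt; omega⟩)
          * G u (Fin.succ ⟨n + i.1, by have := i.isLt; omega⟩)
        - F u (Fin.succ ⟨n + i.1, by have := i.isLt; omega⟩)
          * G u (Fin.succ ⟨i.1, by have := i.isLt; omega⟩)))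
      (∑ i : Fin n,
      ((F' (Fin.succ ⟨i.1, by have := i.isLt; omega⟩)
          * G s (Fin.succ ⟨n + i.1, by have := i.isLt; omega⟩)
        + F s (Fin.succ ⟨i.1, by have := i.isLt; omega⟩)
          * G' (Fin.succ ⟨n + i.1, by have := i.isLt; omega⟩))
        - (F' (Fin.succ ⟨n + i.1, by have := i.isLt; omega⟩)
          * G s (Fin.succ ⟨i.1, by have := i.isLt; omega⟩)
        + F s (Fin.succ ⟨n + i.1, by have := i.isLt; omega⟩)
          * G' (Fin.succ ⟨i.1, by have := i.isLt; omega⟩)))) s :=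
    HasDerivAt.fun_sum (fun i _ =>
      (((hc _).mul (hd _)).sub ((hc _).mul (hd _))))
  have h2 := hsum.const_mul (1/2 : ℝ)
  have hval : beta2 n (Fin.tail F') (Fin.tail (G s)) + beta2 n (Fin.tail (F s)) (Fin.tail G')
      = (1/2 : ℝ) * (∑ i : Fin n,
      ((F' (Fin.succ ⟨i.1, by have := i.isLt; omega⟩)
          * G s (Fin.succ ⟨n + i.1, by have := i.isLt; omega⟩)
        + F s (Fin.succ ⟨i.1, by have := i.isLt; omega⟩)
          * G' (Fin.succ ⟨n + i.1, by have := i.isLt; omega⟩))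
        - (F' (Fin.succ ⟨n + i.1, by have := i.isLt; omega⟩)
          * G s (Fin.succ ⟨i.1, by have := i.isLt; omega⟩)
        + F s (Fin.succ ⟨n + i.1, by have := i.isLt; omega⟩)
          * G' (Fin.succ ⟨i.1, by have := i.isLt; omega⟩)))) := by
    unfold beta2
    rw [← mul_add, ← Finset.sum_add_distrib]
    congr 1
    refine Finset.sum_congr rfl fun i _ => ?_
    simp only [Fin.tail]
    ring
  rw [hval]
  exact h2

end Helpers

/-- **Kac decomposition for contact diffeomorphisms.** Every orientation preserving
contact diffeomorphism `φ` of `ℝ^{2n+1}` determines unique `a ∈ H_n`, `A ∈ Sp(n,ℝ)`,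
`t > 0` such that `ψ := (L_a∘S_A∘μ_t)⁻¹∘φ` (equivalently: `φ = L_a∘S_A∘μ_t∘ψ`)
satisfies `ψ(0) = 0` and has identity H-tangent map at `0`:
`Dψ(0)v = v` for `v⁰ = 0`, and `(Dψ(0)e₀)⁰ = 1`. -/
theorem stmt16 (n : ℕ) (φ φinv : HPt n → HPt n)
    (hli : Function.LeftInverse φinv φ) (hri : Function.RightInverse φinv φ)
    (hsm : ContDiff ℝ (⊤ : ℕ∞) φ) (hsm' : ContDiff ℝ (⊤ : ℕ∞) φinv)
    (hcontact : ∃ f : HPt n → ℝ, (∀ x, 0 < f x) ∧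
      ∀ (x v : HPt n), alphaForm n (φ x) (fderiv ℝ φ x v) = f x * alphaForm n x v) :
    ∃! p : HPt n × Matrix (Fin (2*n)) (Fin (2*n)) ℝ × ℝ,
      IsSymplectic n p.2.1 ∧ 0 < p.2.2 ∧
      ∃ ψ : HPt n → HPt n,
        (∀ x, φ x = hmul n p.1 (SAmap n p.2.1 (muT n p.2.2 (ψ x)))) ∧
        ψ 0 = 0 ∧
        (∀ v : HPt n, v 0 = 0 → fderiv ℝ ψ 0 v = v) ∧
        fderiv ℝ ψ 0 (Pi.single 0 1) 0 = 1 := by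
  classical
  obtain ⟨f, hfpos, hc⟩ := hcontact
  have hφdiff : Differentiable ℝ φ := hsm.differentiable (by simp)
  have hfdC : ContDiff ℝ (⊤ : ℕ∞) (fderiv ℝ φ) := hsm.fderiv_right (by exact_mod_cast le_top)
  have hfdiff : Differentiable ℝ (fderiv ℝ φ) := hfdC.differentiable (by simp)
  set M : HPt n →L[ℝ] HPt n := fderiv ℝ φ 0 with hMdef
  set D2 : HPt n →L[ℝ] HPt n →L[ℝ] HPt n := fderiv ℝ (fderiv ℝ φ) 0 with hD2def
  set a : HPt n := φ 0 with hadef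
  have htail0 : Fin.tail (0 : HPt n) = 0 := rfl
  have halpha0 : ∀ v : HPt n, alphaForm n 0 v = -(v 0) := by
    intro v
    unfold alphaForm
    rw [htail0, beta2_zero_left]
    ring
  set f0 : ℝ := M (Pi.single 0 1) 0
      - beta2 n (Fin.tail a) (Fin.tail (M (Pi.single 0 1))) with hf0def
  have hf0f : f0 = f 0 := by
    have h := hc 0 (Pi.single 0 1)
    rw [halpha0] at h
    unfold alphaForm at h
    rw [← hadef, ← hMdef] at h
    simp only [Pi.single_eq_same] at h
    rw [hf0def]
    linarith
  have hf0pos : 0 < f0 := hf0f ▸ hfpos 0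
  have hhoriz : ∀ v : HPt n, v 0 = 0 →
      M v 0 = beta2 n (Fin.tail a) (Fin.tail (M v)) := by
    intro v hv
    have h := hc 0 v
    rw [halpha0, hv] at h
    unfold alphaForm at h
    rw [← hadef, ← hMdef] at h
    simp only [mul_neg, neg_zero, mul_zero] at h
    linarith
  set Q : Matrix (Fin (2*n)) (Fin (2*n)) ℝ :=
    Matrix.of (fun i j => Fin.tail (M (Fin.cons 0 (Pi.single j 1))) i) with hQdef
  have hQ : ∀ v' : Fin (2*n) → ℝ, Q.mulVec v' = Fin.tail (M (Fin.cons 0 v')) := by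
    intro v'
    have hdec : (Fin.cons 0 v' : HPt n)
        = ∑ j : Fin (2*n), v' j • (Fin.cons 0 (Pi.single j 1) : HPt n) := by
      funext i
      refine Fin.cases ?_ ?_ i
      · simp [Finset.sum_apply]
      · intro k
        simp only [Finset.sum_apply, Pi.smul_apply, Fin.cons_succ, smul_eq_mul,
          Pi.single_apply, mul_ite, mul_one, mul_zero]
        rw [Finset.sum_ite_eq Finset.univ k v']
        simp
    funext i
    have h1 : Fin.tail (M (Fin.cons 0 v')) i = M (Fin.cons 0 v') i.succ := rfl
    rw [h1, hdec, map_sum, Finset.sum_apply]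
    unfold Matrix.mulVec dotProduct
    refine Finset.sum_congr rfl fun j _ => ?_
    rw [map_smul]
    simp only [Pi.smul_apply, smul_eq_mul]
    exact mul_comm _ _
  -- derivative of the contact pairing along lines
  have hAD : ∀ v w : HPt n, HasDerivAt
      (fun s : ℝ => alphaForm n (φ (s • v)) (fderiv ℝ φ (s • v) w))
      (-(D2 v w 0) + (beta2 n (Fin.tail (M v)) (Fin.tail (M w))
        + beta2 n (Fin.tail a) (Fin.tail (D2 v w)))) 0 := by
    intro v w
    have hline : HasDerivAt (fun s : ℝ => s • v) v 0 := by
      simpa using (hasDerivAt_id (0:ℝ)).smul_const v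
    have h0 : (0:ℝ) • v = 0 := zero_smul ℝ v
    have hPhi : HasDerivAt (fun s : ℝ => φ (s • v)) (M v) 0 := by
      have hF : HasFDerivAt φ M ((0:ℝ) • v) := by
        rw [h0]
        exact (hφdiff 0).hasFDerivAt
      exact hF.comp_hasDerivAt 0 hline
    have hDphi : HasDerivAt (fun s : ℝ => fderiv ℝ φ (s • v)) (D2 v) 0 := by
      have hF : HasFDerivAt (fderiv ℝ φ) D2 ((0:ℝ) • v) := by
        rw [h0]
        exact (hfdiff 0).hasFDerivAt
      exact hF.comp_hasDerivAt 0 hline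
    have hPsiw : HasDerivAt (fun s : ℝ => fderiv ℝ φ (s • v) w) (D2 v w) 0 := by
      have := hDphi.clm_apply (hasDerivAt_const 0 w)
      simpa [h0, ← hMdef] using this
    have h1 : HasDerivAt (fun s : ℝ => (fderiv ℝ φ (s • v) w) 0) (D2 v w 0) 0 :=
      hasDerivAt_pi.1 hPsiw 0
    have h2 := hasDerivAt_beta2_tail hPhi hPsiw
    simp only [h0, ← hadef, ← hMdef] at h2
    exact (h1.neg).add h2
  have hsymmD : ∀ v w : HPt n, D2 v w = D2 w v :=
    fun v w => second_derivative_symmetric (f' := fderiv ℝ φ)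
      (fun y => (hφdiff y).hasFDerivAt) ((hfdiff 0).hasFDerivAt) v w
  have heq : ∀ v w : HPt n, v 0 = 0 → w 0 = 0 →
      -(D2 v w 0) + (beta2 n (Fin.tail (M v)) (Fin.tail (M w))
        + beta2 n (Fin.tail a) (Fin.tail (D2 v w)))
      = f0 * beta2 n (Fin.tail v) (Fin.tail w) := by
    intro v w hv hw
    set c : ℝ := beta2 n (Fin.tail v) (Fin.tail w) with hcdef
    have hfun : (fun s : ℝ => alphaForm n (φ (s • v)) (fderiv ℝ φ (s • v) w))
        = (fun s : ℝ =>
            (-(alphaForm n (φ (s • v)) (fderiv ℝ φ (s • v) (Pi.single 0 1))))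
              * (s * c)) := by
      funext s
      rw [hc (s • v) w, hc (s • v) (Pi.single 0 1)]
      unfold alphaForm
      rw [tail_single0, beta2_zero_right, tail_smul, beta2_smul_left, hw,
        Pi.single_eq_same]
      ring
    have h2 : HasDerivAt (fun s : ℝ =>
        (-(alphaForm n (φ (s • v)) (fderiv ℝ φ (s • v) (Pi.single 0 1)))) * (s * c))
        ((-(-(D2 v (Pi.single 0 1) 0)
            + (beta2 n (Fin.tail (M v)) (Fin.tail (M (Pi.single 0 1)))
              + beta2 n (Fin.tail a) (Fin.tail (D2 v (Pi.single 0 1)))))) * ((0:ℝ) * c)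
          + (-(alphaForm n (φ ((0:ℝ) • v)) (fderiv ℝ φ ((0:ℝ) • v) (Pi.single 0 1))))
            * (1 * c)) 0 :=
      HasDerivAt.mul (hAD v (Pi.single 0 1)).neg ((hasDerivAt_id 0).mul_const c)
    have h1 := hAD v w
    rw [hfun] at h1
    have h3 := h1.unique h2
    have h4 : alphaForm n (φ ((0:ℝ) • v)) (fderiv ℝ φ ((0:ℝ) • v) (Pi.single 0 1))
        = -f0 := by
      rw [zero_smul, ← hadef, ← hMdef]
      unfold alphaForm
      rw [hf0def]
      ring
    rw [h4] at h3
    rw [h3]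
    ring
  have hkey : ∀ v' w' : Fin (2*n) → ℝ,
      beta2 n (Q.mulVec v') (Q.mulVec w') = f0 * beta2 n v' w' := by
    intro v' w'
    have e1 := heq (Fin.cons 0 v') (Fin.cons 0 w') (Fin.cons_zero _ _) (Fin.cons_zero _ _)
    have e2 := heq (Fin.cons 0 w') (Fin.cons 0 v') (Fin.cons_zero _ _) (Fin.cons_zero _ _)
    rw [hsymmD (Fin.cons 0 w') (Fin.cons 0 v')] at e2
    simp only [Fin.tail_cons] at e1 e2
    rw [← hQ v', ← hQ w'] at e1 e2
    rw [beta2_antisymm (Q.mulVec w') (Q.mulVec v'), beta2_antisymm w' v'] at e2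
    linarith
  set t : ℝ := Real.sqrt f0 with htdef
  have htpos : 0 < t := Real.sqrt_pos.2 hf0pos
  have ht2 : t^2 = f0 := Real.sq_sqrt hf0pos.le
  set A : Matrix (Fin (2*n)) (Fin (2*n)) ℝ := t⁻¹ • Q with hAdef
  have hAsymp : IsSymplectic n A := symp_of_beta Q ht2 htpos.ne' hkey
  have hAdet : IsUnit A.det := symp_isUnit hAsymp
  have hQA : Q = t • A := by
    rw [hAdef, smul_smul, mul_inv_cancel₀ htpos.ne', one_smul]
  refine ⟨(a, A, t), ⟨hAsymp, htpos, ?_⟩, ?_⟩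
  · -- existence of ψ
    set L : HPt n →L[ℝ] HPt n :=
      LinearMap.toContinuousLinearMap (Lfun n (Fin.tail a) A⁻¹ t) with hLdef
    have hLcoe : ∀ y : HPt n, L y = Lfun n (Fin.tail a) A⁻¹ t y := fun y => rfl
    refine ⟨fun x => L (φ x - a), ?_, ?_, ?_, ?_⟩
    · intro x
      have h := solve_fwd a A t hAdet htpos.ne' (φ x)
      show φ x = hmul n a (SAmap n A (muT n t (L (φ x - a))))
      rw [hLcoe]
      exact h.symm
    · show L (φ 0 - a) = 0
      rw [← hadef, sub_self, map_zero]
    · have hfd : fderiv ℝ (fun x => L (φ x - a)) 0 = L.comp M := by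
        refine HasFDerivAt.fderiv ?_
        have h1 : HasFDerivAt (fun x => φ x - a) M 0 := (hφdiff 0).hasFDerivAt.sub_const a
        exact L.hasFDerivAt.comp 0 h1
      intro v hv
      rw [hfd]
      show L (M v) = v
      rw [hLcoe]
      have hvc : (Fin.cons 0 (Fin.tail v) : HPt n) = v := by
        rw [← hv]
        exact Fin.cons_self_tail v
      funext i
      refine Fin.cases ?_ ?_ i
      · rw [Lfun_zero, hhoriz v hv, sub_self, mul_zero, hv]
      · intro j
        rw [Lfun_succ]
        have htl : Fin.tail (M v) = Q.mulVec (Fin.tail v) := by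
          rw [hQ, hvc]
        rw [htl, Matrix.mulVec_mulVec, hQA, Matrix.mul_smul,
          Matrix.nonsing_inv_mul A hAdet, Matrix.smul_mulVec, Matrix.one_mulVec]
        simp only [Pi.smul_apply, smul_eq_mul]
        rw [show Fin.tail v j = v j.succ from rfl]
        field_simp
    · have hfd : fderiv ℝ (fun x => L (φ x - a)) 0 = L.comp M := by
        refine HasFDerivAt.fderiv ?_
        have h1 : HasFDerivAt (fun x => φ x - a) M 0 := (hφdiff 0).hasFDerivAt.sub_const a
        exact L.hasFDerivAt.comp 0 h1
      rw [hfd]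
      show L (M (Pi.single 0 1)) 0 = 1
      rw [hLcoe, Lfun_zero, ← hf0def, ht2]
      field_simp
  · rintro ⟨a₁, A₁, t₁⟩ ⟨hs₁, ht₁pos, ψ₁, h1, h2, h3, h4⟩
    have hdet₁ : IsUnit A₁.det := symp_isUnit hs₁
    have hG0 : hmul n a₁ (SAmap n A₁ (muT n t₁ (0:HPt n))) = a₁ := by
      funext i
      refine Fin.cases ?_ ?_ i
      · rw [Gmap_zero, htail0, smul_zero, Matrix.mulVec_zero, beta2_zero_right]
        simp
      · intro j
        rw [show hmul n a₁ (SAmap n A₁ (muT n t₁ (0:HPt n))) j.succ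
          = Fin.tail (hmul n a₁ (SAmap n A₁ (muT n t₁ (0:HPt n)))) j from rfl,
          Gmap_tail, htail0, smul_zero, Matrix.mulVec_zero]
        simp [Fin.tail]
    have ha₁ : a₁ = a := by
      have h := h1 0
      rw [h2, hG0] at h
      rw [hadef]
      exact h.symm
    set L₁ : HPt n →L[ℝ] HPt n :=
      LinearMap.toContinuousLinearMap (Lfun n (Fin.tail a₁) A₁⁻¹ t₁) with hL₁def
    have hL₁coe : ∀ y : HPt n, L₁ y = Lfun n (Fin.tail a₁) A₁⁻¹ t₁ y := fun _ => rfl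
    have hψ₁ : ψ₁ = fun x => L₁ (φ x - a₁) := by
      funext x
      have hb := solve_bwd a₁ A₁ t₁ hdet₁ ht₁pos.ne' (ψ₁ x)
      rw [← h1 x] at hb
      rw [hL₁coe]
      exact hb.symm
    have hfd₁ : fderiv ℝ ψ₁ 0 = L₁.comp M := by
      refine HasFDerivAt.fderiv ?_
      rw [hψ₁]
      exact L₁.hasFDerivAt.comp 0 ((hφdiff 0).hasFDerivAt.sub_const a₁)
    have ht₁2 : t₁^2 = f0 := by
      have h := h4
      rw [hfd₁] at h
      have h' : L₁ (M (Pi.single 0 1)) 0 = 1 := h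
      rw [hL₁coe, Lfun_zero, ha₁, ← hf0def] at h'
      have ht₁ne : (t₁:ℝ)^2 ≠ 0 := pow_ne_zero 2 ht₁pos.ne'
      field_simp at h'
      linarith
    have ht₁ : t₁ = t := by
      have h5 : (t₁ - t) * (t₁ + t) = 0 := by
        have h6 : t₁^2 - t^2 = 0 := by rw [ht₁2, ht2]; ring
        linear_combination h6
      rcases mul_eq_zero.1 h5 with h6 | h6
      · linarith
      · linarith
    have hAQ₁ : A₁⁻¹ * Q = t₁ • 1 := by
      ext i j
      have hv := h3 (Fin.cons 0 (Pi.single j 1)) (Fin.cons_zero _ _)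
      rw [hfd₁] at hv
      have hvi : L₁ (M (Fin.cons 0 (Pi.single j 1))) i.succ
          = (Fin.cons 0 (Pi.single j 1) : HPt n) i.succ := congrFun hv i.succ
      rw [hL₁coe, Lfun_succ, Fin.cons_succ,
        show Fin.tail (M (Fin.cons 0 (Pi.single j 1))) = Q.mulVec (Pi.single j 1)
          from (hQ _).symm,
        Matrix.mulVec_mulVec, Matrix.mulVec_single_one, Matrix.col_apply, Pi.single_apply] at hvi
      have hX : (A₁⁻¹ * Q) i j = t₁ * (if i = j then (1:ℝ) else 0) := by
        rw [← hvi]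
        field_simp
      rw [hX, Matrix.smul_apply, Matrix.one_apply, smul_eq_mul]
    have hQ₁ : Q = t₁ • A₁ := by
      have h7 : A₁ * (A₁⁻¹ * Q) = Q := by
        rw [← mul_assoc, Matrix.mul_nonsing_inv _ hdet₁, one_mul]
      rw [hAQ₁] at h7
      rw [← h7, Matrix.mul_smul, mul_one]
    have hA₁ : A₁ = A := by
      rw [hAdef, hQ₁, ht₁, smul_smul, inv_mul_cancel₀ htpos.ne', one_smul]
    show (a₁, A₁, t₁) = (a, A, t)
    rw [ha₁, hA₁, ht₁]
end
end
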